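/- arXiv:1501.01975 — 7 statements merged into one kernel-verified Lean document; each statement's English description precedes it below -/
import Mathlib

section
/- Let α_s, α_t, α_u be complex numbers with α_s + α_t + α_u = -1, none of them a nonnegative integer, and such that ζ(-α_x) ≠ 0 and α_x ∉ {0, -1} for x ∈ {s,t,u}. Then B(-α_s,-α_t) + B(-α_t,-α_u) + B(-α_s,-α_u) = ∏_{x∈{s,t,u}} ζ(1+α_x)/ζ(-α_x). -/
open Complex

/-- The Euler Beta function `B(x,y) = Γ(x)Γ(y)/Γ(x+y)`. -/
noncomputable def eulerBeta (x y : ℂ) : ℂ := Complex.Gamma x * Complex.Gamma y / Complex.Gamma (x + y)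

open Real
lemma trig_key (s t u : ℂ) (h : s + t + u = -1) :
    Complex.sin (π*s) + Complex.sin (π*t) + Complex.sin (π*u)
      = -(4 * (Complex.cos (π*s/2) * Complex.cos (π*t/2) * Complex.cos (π*u/2))) := by
  obtain rfl : u = -1 - s - t := by linear_combination h
  have key : Complex.sin (π*s) + Complex.sin (π*t)
      = 2 * Complex.sin (π*(s+t)/2) * Complex.cos (π*(s-t)/2) := by
    rw [Complex.sin_add_sin]; ring_nf
  have h1 : Complex.sin (↑π*(-1-s-t)) =
      2 * Complex.sin (π*(s+t)/2) * Complex.cos (π*(s+t)/2) := by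
    have e : (↑π*(-1-s-t) : ℂ) = -(π + (π*(s+t)/2 + π*(s+t)/2)) := by ring
    rw [e, Complex.sin_neg, Complex.sin_add, Complex.sin_add, Complex.cos_add,
      Complex.sin_pi, Complex.cos_pi]
    ring
  have h2 : Complex.cos (↑π*(-1-s-t)/2) = -Complex.sin (π*(s+t)/2) := by
    have e : (↑π*(-1-s-t)/2 : ℂ) = -(π/2 + π*(s+t)/2) := by ring
    rw [e, Complex.cos_neg, Complex.cos_add, Complex.cos_pi_div_two,
      Complex.sin_pi_div_two]
    ring
  have h3 : Complex.cos (π*(s-t)/2) + Complex.cos (π*(s+t)/2)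
      = 2 * Complex.cos (π*s/2) * Complex.cos (π*t/2) := by
    rw [Complex.cos_add_cos]
    rw [show (π*(s-t)/2 + π*(s+t)/2)/2 = π*s/2 by ring,
      show (π*(s-t)/2 - π*(s+t)/2)/2 = -(π*t/2) by ring, Complex.cos_neg]
  rw [key, h1, h2]
  linear_combination (2 * Complex.sin (π*(s+t)/2)) * h3

lemma zeta_ratio (α : ℂ) (hn : ∀ n : ℕ, α ≠ n) (h1 : α ≠ -1) (hζ : riemannZeta (-α) ≠ 0) :
    riemannZeta (1 + α) / riemannZeta (-α)
      = 2 * (2 * π) ^ α * Complex.Gamma (-α) * Complex.cos (π * α / 2) := by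
  have h := riemannZeta_one_sub (s := -α) (fun n hc => hn n (by linear_combination -hc))
    (fun hc => h1 (by linear_combination -hc))
  rw [show (1 : ℂ) - -α = 1 + α by ring, neg_neg,
    show (↑π * -α / 2 : ℂ) = -(π * α / 2) by ring, Complex.cos_neg] at h
  rw [h]; field_simp

lemma beta_eq (s t u : ℂ) (hsum : s + t + u = -1) (hu : ∀ n : ℕ, u ≠ n) :
    eulerBeta (-s) (-t)
      = -(Complex.Gamma (-s) * Complex.Gamma (-t) * Complex.Gamma (-u)
          * Complex.sin (π * u) / π) := by
  have hπ : (↑π : ℂ) ≠ 0 := Complex.ofReal_ne_zero.mpr Real.pi_ne_zero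
  have hst : (-s + -t : ℂ) = 1 + u := by linear_combination -hsum
  rw [eulerBeta, hst]
  by_cases hz : Complex.sin (↑π * u) = 0
  · obtain ⟨k, hk⟩ := Complex.sin_eq_zero_iff.mp hz
    have huk : u = (k : ℂ) := by
      have h2 : (↑π : ℂ) * u = ↑π * ↑k := by rw [hk]; ring
      exact mul_left_cancel₀ hπ h2
    have hkneg : k < 0 := by
      by_contra hge
      exact hu k.toNat (by rw [huk]; norm_cast; omega)
    have hG : Complex.Gamma (1 + u) = 0 := by
      rw [Complex.Gamma_eq_zero_iff]
      refine ⟨(-1 - k).toNat, ?_⟩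
      have h3 : ((-1 - k).toNat : ℤ) = -1 - k := Int.toNat_of_nonneg (by omega)
      have h4 : (((-1 - k).toNat : ℕ) : ℂ) = ((-1 - k : ℤ) : ℂ) := by exact_mod_cast congrArg (Int.cast : ℤ → ℂ) h3
      rw [huk, h4]
      push_cast
      ring
    rw [hG, hz, div_zero]
    ring
  · have hGu : Complex.Gamma (-u) ≠ 0 :=
      Complex.Gamma_ne_zero (fun n hc => hu n (by linear_combination -hc))
    have href := Complex.Gamma_mul_Gamma_one_sub (-u)
    rw [show (1 : ℂ) - -u = 1 + u by ring,
      show (↑π * -u : ℂ) = -(π * u) by ring, Complex.sin_neg] at href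
    have href' : Complex.Gamma (-u) * Complex.Gamma (1 + u) * (-Complex.sin (↑π * u)) = ↑π := by
      rw [href]
      field_simp
    have hG1ne : Complex.Gamma (1 + u) ≠ 0 := by
      intro h0
      rw [h0, mul_zero, zero_mul] at href'
      exact hπ href'.symm
    rw [div_eq_iff hG1ne]
    field_simp
    rw [mul_comm u (↑π : ℂ)]
    linear_combination (-(Complex.Gamma (-s) * Complex.Gamma (-t))) * href'

/-- Freund–Witten: the crossing-symmetrized Veneziano amplitude as a product of
ratios of Riemann zeta values. -/
theorem freund_witten (αs αt αu : ℂ) (hsum : αs + αt + αu = -1)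
    (hs : ∀ n : ℕ, αs ≠ n) (ht : ∀ n : ℕ, αt ≠ n) (hu : ∀ n : ℕ, αu ≠ n)
    (hζs : riemannZeta (-αs) ≠ 0) (hζt : riemannZeta (-αt) ≠ 0)
    (hζu : riemannZeta (-αu) ≠ 0)
    (hs0 : αs ≠ 0) (hs1 : αs ≠ -1) (ht0 : αt ≠ 0) (ht1 : αt ≠ -1)
    (hu0 : αu ≠ 0) (hu1 : αu ≠ -1) :
    eulerBeta (-αs) (-αt) + eulerBeta (-αt) (-αu) + eulerBeta (-αs) (-αu) =
      (riemannZeta (1 + αs) / riemannZeta (-αs)) *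
      (riemannZeta (1 + αt) / riemannZeta (-αt)) *
      (riemannZeta (1 + αu) / riemannZeta (-αu)) := by
  have h2π : (2 * ↑π : ℂ) ≠ 0 := by
    simp [Complex.ofReal_ne_zero.mpr Real.pi_ne_zero]
  have hpow : (2 * ↑π : ℂ) ^ αs * (2 * ↑π) ^ αt * (2 * ↑π) ^ αu = (2 * ↑π : ℂ)⁻¹ := by
    rw [← Complex.cpow_add _ _ h2π, ← Complex.cpow_add _ _ h2π, hsum, Complex.cpow_neg_one]
  have trig := trig_key αs αt αu hsum
  rw [beta_eq αs αt αu hsum hu, beta_eq αt αu αs (by linear_combination hsum) hs,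
    beta_eq αs αu αt (by linear_combination hsum) ht,
    zeta_ratio αs hs hs1 hζs, zeta_ratio αt ht ht1 hζt, zeta_ratio αu hu hu1 hζu]
  linear_combination
    (-(Complex.Gamma (-αs) * Complex.Gamma (-αt) * Complex.Gamma (-αu) / (π : ℂ))) * trig
    + (-8 * Complex.Gamma (-αs) * Complex.Gamma (-αt) * Complex.Gamma (-αu)
        * Complex.cos (π * αs / 2) * Complex.cos (π * αt / 2) * Complex.cos (π * αu / 2)) * hpow
end

section
/- For x ∈ ℝ with x > 0 and n a nonnegative integer, ∫₀^∞ (2T/(T² + 1/4)²) · arctan(T/(x+n)) dT = π/(1/2 + x + n). -/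
open Real MeasureTheory Filter Topology

lemma arctan_div_deriv (a : ℝ) (ha : a ≠ 0) (T : ℝ) :
    HasDerivAt (fun T : ℝ => Real.arctan (T / a)) (a / (T ^ 2 + a ^ 2)) T := by
  have := (Real.hasDerivAt_arctan (T / a)).comp T ((hasDerivAt_id T).div_const a)
  refine this.congr_deriv ?_
  have h : T ^ 2 + a ^ 2 ≠ 0 := by positivity
  field_simp
  ring

lemma arctan_two_deriv (T : ℝ) :
    HasDerivAt (fun T : ℝ => Real.arctan (2 * T)) (2 / (1 + (2 * T) ^ 2)) T := by
  have := (Real.hasDerivAt_arctan (2 * T)).comp T ((hasDerivAt_id T).const_mul 2)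
  refine this.congr_deriv ?_
  ring

lemma sq_add_quarter_deriv (T : ℝ) :
    HasDerivAt (fun T : ℝ => T ^ 2 + 1 / 4) (2 * T) T := by
  simpa using (hasDerivAt_pow 2 T).add_const (1 / 4 : ℝ)

lemma tendsto_sq_quarter : Tendsto (fun T : ℝ => T ^ 2 + 1 / 4) atTop atTop :=
  tendsto_atTop_add_const_right atTop (1 / 4) (tendsto_pow_atTop two_ne_zero)

lemma tendsto_arctan_div (a : ℝ) (ha : 0 < a) :
    Tendsto (fun T : ℝ => Real.arctan (T / a)) atTop (𝓝 (π / 2)) :=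
  (tendsto_nhds_of_tendsto_nhdsWithin Real.tendsto_arctan_atTop).comp
    (tendsto_id.atTop_div_const ha)

lemma tendsto_arctan_two : Tendsto (fun T : ℝ => Real.arctan (2 * T)) atTop (𝓝 (π / 2)) :=
  (tendsto_nhds_of_tendsto_nhdsWithin Real.tendsto_arctan_atTop).comp
    (tendsto_id.const_mul_atTop two_pos)

lemma aux (a : ℝ) (ha : 0 < a) :
    ∫ T in Set.Ioi (0 : ℝ),
        (2 * T / (T ^ 2 + 1 / 4) ^ 2) * Real.arctan (T / a) = π / (1 / 2 + a) := by
  have h14 : ∀ T : ℝ, T ^ 2 + 1 / 4 ≠ 0 := fun T => by positivity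
  have hnonneg : ∀ T ∈ Set.Ioi (0 : ℝ),
      0 ≤ (2 * T / (T ^ 2 + 1 / 4) ^ 2) * Real.arctan (T / a) := by
    intro T hT
    have hT' : (0:ℝ) < T := hT
    have : 0 ≤ Real.arctan (T / a) := by
      rw [← Real.arctan_zero]
      exact Real.arctan_strictMono.monotone (by positivity)
    positivity
  rcases eq_or_ne a (1 / 2) with rfl | hne
  · -- a = 1/2
    set F : ℝ → ℝ := fun T =>
      -Real.arctan (2 * T) / (T ^ 2 + 1 / 4) + T / (T ^ 2 + 1 / 4) + 2 * Real.arctan (2 * T)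
      with hF
    have hderiv : ∀ T : ℝ, HasDerivAt F
        ((2 * T / (T ^ 2 + 1 / 4) ^ 2) * Real.arctan (T / (1/2))) T := by
      intro T
      have h1 := ((arctan_two_deriv T).neg.div (sq_add_quarter_deriv T) (h14 T))
      have h2 := ((hasDerivAt_id T).div (sq_add_quarter_deriv T) (h14 T))
      have h3 := (arctan_two_deriv T).const_mul 2
      have := (h1.add h2).add h3
      refine this.congr_deriv ?_
      simp only [Pi.neg_apply, id_eq]
      have h4 : (1 : ℝ) + (2 * T) ^ 2 ≠ 0 := by positivity
      rw [show T / (1/2 : ℝ) = 2 * T by ring]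
      field_simp [h14 T]
      ring
    have htend : Tendsto F atTop (𝓝 (π / (1 / 2 + 1 / 2))) := by
      have t1 : Tendsto (fun T : ℝ => -Real.arctan (2 * T) / (T ^ 2 + 1 / 4)) atTop (𝓝 0) :=
        tendsto_arctan_two.neg.div_atTop tendsto_sq_quarter
      have t2 : Tendsto (fun T : ℝ => T / (T ^ 2 + 1 / 4)) atTop (𝓝 0) := by
        apply tendsto_of_tendsto_of_tendsto_of_le_of_le'
          (tendsto_const_nhds : Tendsto (fun _ : ℝ => (0:ℝ)) atTop (𝓝 0))
          (tendsto_inv_atTop_zero : Tendsto (fun r : ℝ => r⁻¹) atTop (𝓝 0))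
          (eventually_atTop.2 ⟨1, ?_⟩) (eventually_atTop.2 ⟨1, ?_⟩)
        · intro T hT
          have hT' : (0:ℝ) < T := lt_of_lt_of_le one_pos hT
          positivity
        · intro T hT
          have hT' : (0:ℝ) < T := lt_of_lt_of_le one_pos hT
          rw [div_le_iff₀ (by positivity)]
          have h : T * T ≤ T ^ 2 + 1 / 4 := by nlinarith
          calc T = T⁻¹ * (T * T) := by field_simp
          _ ≤ T⁻¹ * (T ^ 2 + 1/4) := mul_le_mul_of_nonneg_left h (by positivity)
      have t3 : Tendsto (fun T : ℝ => 2 * Real.arctan (2 * T)) atTop (𝓝 (2 * (π / 2))) :=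
        tendsto_arctan_two.const_mul 2
      have := (t1.add t2).add t3
      convert this using 2
      ring
    have := integral_Ioi_of_hasDerivAt_of_nonneg' (fun T _ => hderiv T) hnonneg htend
    rw [this, hF]
    norm_num
  · -- a ≠ 1/2
    have ha2 : a ^ 2 - 1 / 4 ≠ 0 := by
      intro h
      apply hne
      nlinarith
    set F : ℝ → ℝ := fun T =>
      -Real.arctan (T / a) / (T ^ 2 + 1 / 4) +
        a / (a ^ 2 - 1 / 4) * (2 * Real.arctan (2 * T) - (1 / a) * Real.arctan (T / a))
      with hF
    have hderiv : ∀ T : ℝ, HasDerivAt F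
        ((2 * T / (T ^ 2 + 1 / 4) ^ 2) * Real.arctan (T / a)) T := by
      intro T
      have h1 := ((arctan_div_deriv a ha.ne' T).neg.div (sq_add_quarter_deriv T) (h14 T))
      have h3 := ((arctan_two_deriv T).const_mul 2).sub
        ((arctan_div_deriv a ha.ne' T).const_mul (1 / a))
      have := h1.add (h3.const_mul (a / (a ^ 2 - 1 / 4)))
      refine this.congr_deriv ?_
      simp only [Pi.neg_apply, id_eq]
      have h4 : (1 : ℝ) + (2 * T) ^ 2 ≠ 0 := by positivity
      have h5 : T ^ 2 + a ^ 2 ≠ 0 := by positivity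
      have e2 : a / (a ^ 2 - 1 / 4) * (2 * (2 / (1 + (2 * T) ^ 2)) - 1 / a * (a / (T ^ 2 + a ^ 2)))
          = a / ((T ^ 2 + 1 / 4) * (T ^ 2 + a ^ 2)) := by
        rw [div_mul_eq_mul_div, div_eq_div_iff ha2 (by positivity)]
        field_simp
        ring
      rw [e2]
      field_simp
      ring
    have htend : Tendsto F atTop (𝓝 (π / (1 / 2 + a))) := by
      have t1 : Tendsto (fun T : ℝ => -Real.arctan (T / a) / (T ^ 2 + 1 / 4)) atTop (𝓝 0) :=
        (tendsto_arctan_div a ha).neg.div_atTop tendsto_sq_quarter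
      have t2 : Tendsto (fun T : ℝ =>
          a / (a ^ 2 - 1 / 4) * (2 * Real.arctan (2 * T) - (1 / a) * Real.arctan (T / a)))
          atTop (𝓝 (a / (a ^ 2 - 1 / 4) * (2 * (π / 2) - (1 / a) * (π / 2)))) :=
        ((tendsto_arctan_two.const_mul 2).sub ((tendsto_arctan_div a ha).const_mul (1 / a))).const_mul _
      have := t1.add t2
      have h12 : (1 / 2 : ℝ) + a ≠ 0 := by positivity
      have heq : (0 : ℝ) + a / (a ^ 2 - 1 / 4) * (2 * (π / 2) - (1 / a) * (π / 2))
          = π / (1 / 2 + a) := by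
        rw [zero_add, div_mul_eq_mul_div, div_eq_div_iff ha2 h12]
        field_simp
        ring
      rw [heq] at this
      exact this
    have := integral_Ioi_of_hasDerivAt_of_nonneg' (fun T _ => hderiv T) hnonneg htend
    rw [this, hF]
    norm_num

theorem integral_arctan_kernel (x : ℝ) (hx : 0 < x) (n : ℕ) :
    ∫ T in Set.Ioi (0 : ℝ),
        (2 * T / (T ^ 2 + 1 / 4) ^ 2) * Real.arctan (T / (x + n)) =
      Real.pi / (1 / 2 + x + n) := by
  have ha : (0 : ℝ) < x + n := by positivity
  have := aux (x + n) ha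
  rw [this, add_assoc]
end

section
/- For real x > 0 and real y, with x + iy not a nonpositive integer, the argument of the Gamma function satisfies arg Γ(x + iy) = y·ψ(x) + Σ_{n=0}^∞ ( y/(x+n) - arctan(y/(x+n)) ), where the series converges. -/
open Complex

/-- The digamma function `ψ(x) = Γ'(x)/Γ(x)`. -/
noncomputable def digamma (x : ℝ) : ℝ := deriv Real.Gamma x / Real.Gamma x

open Filter Finset Topology

namespace ArgGammaAux

/-- `arctan t ≤ t` for `t ≥ 0`. -/
lemma arctan_le_self {t : ℝ} (ht : 0 ≤ t) : Real.arctan t ≤ t := by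
  have mono : Monotone (fun s : ℝ => s - Real.arctan s) := by
    apply monotone_of_deriv_nonneg
    · exact differentiable_id.sub Real.differentiable_arctan
    · intro s
      have hd : HasDerivAt (fun s : ℝ => s - Real.arctan s) (1 - 1 / (1 + s ^ 2)) s :=
        (hasDerivAt_id s).sub (Real.hasDerivAt_arctan s)
      rw [hd.deriv]
      have h1 : (0:ℝ) < 1 + s ^ 2 := by positivity
      have : 1 / (1 + s ^ 2) ≤ 1 := by
        rw [div_le_one h1]; nlinarith [sq_nonneg s]
      linarith
  have := mono ht
  simpa using this

lemma self_sub_arctan_le_sq {t : ℝ} (ht : 0 ≤ t) : t - Real.arctan t ≤ t ^ 2 := by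
  have mono : MonotoneOn (fun s : ℝ => s ^ 2 - (s - Real.arctan s)) (Set.Ici 0) := by
    apply monotoneOn_of_deriv_nonneg (convex_Ici 0)
    · exact ((continuous_pow 2).sub (continuous_id.sub Real.continuous_arctan)).continuousOn
    · exact ((differentiable_id.pow 2).sub
        (differentiable_id.sub Real.differentiable_arctan)).differentiableOn
    · intro s hs
      rw [interior_Ici] at hs
      have hs0 : (0:ℝ) < s := hs
      have hd : HasDerivAt (fun s : ℝ => s ^ 2 - (s - Real.arctan s))
          (2 * s - (1 - 1 / (1 + s ^ 2))) s := by
        have h1 : HasDerivAt (fun s : ℝ => s ^ 2) (2 * s) s := by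
          simpa using (hasDerivAt_pow 2 s)
        exact h1.sub ((hasDerivAt_id s).sub (Real.hasDerivAt_arctan s))
      rw [hd.deriv]
      have h1 : (0:ℝ) < 1 + s ^ 2 := by positivity
      have h2 : 1 - 1 / (1 + s ^ 2) ≤ s := by
        have e : 1 - 1 / (1 + s ^ 2) = s ^ 2 / (1 + s ^ 2) := by field_simp; ring
        rw [e, div_le_iff₀ h1]
        nlinarith [mul_nonneg hs0.le (sq_nonneg (s - 1))]
      linarith
  have h0 : (0:ℝ) ∈ Set.Ici (0:ℝ) := Set.mem_Ici.2 le_rfl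
  have := mono h0 ht ht
  simpa using this

lemma abs_self_sub_arctan_le (t : ℝ) : |t - Real.arctan t| ≤ t ^ 2 := by
  rcases le_total 0 t with ht | ht
  · rw [_root_.abs_of_nonneg (by linarith [arctan_le_self ht])]
    exact self_sub_arctan_le_sq ht
  · have ht' : 0 ≤ -t := by linarith
    have := self_sub_arctan_le_sq ht'
    have h2 := arctan_le_self ht'
    rw [Real.arctan_neg] at this h2
    rw [_root_.abs_of_nonpos (by linarith)]
    nlinarith

/-- Summability of `1/(x+n)^2`. -/
lemma summable_inv_sq {x : ℝ} (hx : 0 < x) : Summable (fun n : ℕ => ((x + n) ^ 2)⁻¹) := by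
  set c : ℝ := min x 1 with hc
  have hc0 : 0 < c := lt_min hx one_pos
  have hbase : Summable (fun n : ℕ => (((n : ℝ) + 1) ^ 2)⁻¹) := by
    have h := (summable_nat_add_iff 1).2 (Real.summable_one_div_nat_pow.2 one_lt_two)
    apply h.congr
    intro n
    push_cast
    rw [one_div]
  have : Summable (fun n : ℕ => (c ^ 2)⁻¹ * (((n : ℝ) + 1) ^ 2)⁻¹) := hbase.mul_left _
  apply this.of_nonneg_of_le (fun n => by positivity)
  intro n
  have hle : c * ((n : ℝ) + 1) ≤ x + n := by
    have h1 : c ≤ x := min_le_left _ _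
    have h2 : c ≤ 1 := min_le_right _ _
    have : c * n ≤ n := by nlinarith [Nat.cast_nonneg (α := ℝ) n]
    nlinarith
  have hpos : (0:ℝ) < x + n := by positivity
  rw [← mul_inv, ← mul_pow]
  apply inv_anti₀ (by positivity)
  apply pow_le_pow_left₀ (by positivity) hle

lemma summable_main {x : ℝ} (hx : 0 < x) (y : ℝ) :
    Summable (fun n : ℕ => y / (x + n) - Real.arctan (y / (x + n))) := by
  apply Summable.of_abs
  have hb : Summable (fun n : ℕ => y ^ 2 * ((x + n) ^ 2)⁻¹) := (summable_inv_sq hx).mul_left _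
  apply hb.of_nonneg_of_le (fun n => abs_nonneg _)
  intro n
  calc |y / (x + n) - Real.arctan (y / (x + n))| ≤ (y / (x + n)) ^ 2 :=
        abs_self_sub_arctan_le _
    _ = y ^ 2 * ((x + n) ^ 2)⁻¹ := by rw [div_pow, div_eq_mul_inv]

lemma tuo_succ {α : Type*} {F : ℕ → α → ℝ} {g : α → ℝ} {s : Set α}
    (h : TendstoUniformlyOn F g atTop s) :
    TendstoUniformlyOn (fun n => F (n + 1)) g atTop s :=
  fun u hu => (tendsto_add_atTop_nat 1).eventually (h u hu)

/-- Gauss's limit for the digamma function. -/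
lemma tendsto_digamma_seq {x : ℝ} (hx : 0 < x) :
    Tendsto (fun n : ℕ => Real.log n - ∑ m ∈ Finset.range (n + 1), (x + m)⁻¹)
      atTop (𝓝 (digamma x)) := by
  set s : Set ℝ := Set.Ioo (x / 2) (x + 1) with hs
  have hxs : x ∈ s := ⟨by linarith, by linarith⟩
  have hs_open : IsOpen s := isOpen_Ioo
  set γ : ℝ := Real.eulerMascheroniConstant with hγ
  set F' : ℕ → ℝ → ℝ := fun n t => Real.log n - ∑ m ∈ Finset.range (n + 1), (t + m)⁻¹ with hF'def
  set d : ℝ → ℝ := fun t => -γ + ∑' m : ℕ, (((m : ℝ) + 1)⁻¹ - (t + m)⁻¹) with hd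
  -- uniform convergence of F' to d on s
  have hcseq : Tendsto (fun n : ℕ => Real.log n - (harmonic (n + 1) : ℝ)) atTop (𝓝 (-γ)) := by
    have h1 : Tendsto (fun n : ℕ => ((harmonic (n + 1) : ℝ) - Real.log (n + 1))) atTop (𝓝 γ) := by
      have := Real.tendsto_harmonic_sub_log.comp (tendsto_add_atTop_nat 1)
      apply this.congr
      intro n
      simp only [Function.comp_apply]
      push_cast
      ring
    have h2 := Real.tendsto_log_nat_add_one_sub_log
    have h3 := (h1.add h2).neg
    rw [add_zero] at h3
    apply h3.congr
    intro n
    push_cast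
    ring
  have hTU1 : TendstoUniformlyOn (fun (n : ℕ) (_ : ℝ) => Real.log n - (harmonic (n + 1) : ℝ))
      (fun _ => -γ) atTop s := hcseq.tendstoUniformlyOn_const s
  set c : ℝ := min (x / 2) 1 with hcdef
  have hc0 : 0 < c := lt_min (by linarith) one_pos
  have hbound : ∀ (m : ℕ) (t : ℝ), t ∈ s →
      ‖((m : ℝ) + 1)⁻¹ - (t + m)⁻¹‖ ≤ (x + 2) / c * (((m : ℝ) + 1) ^ 2)⁻¹ := by
    intro m t ht
    obtain ⟨ht1, ht2⟩ := ht
    have hm1 : (0:ℝ) < (m : ℝ) + 1 := by positivity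
    have htm : (0:ℝ) < t + m := by
      have : (0:ℝ) ≤ (m:ℝ) := Nat.cast_nonneg m
      nlinarith
    rw [inv_sub_inv hm1.ne' htm.ne']
    have hnum : (t + m) - ((m:ℝ) + 1) = t - 1 := by ring
    rw [hnum, norm_div, Real.norm_eq_abs, Real.norm_eq_abs]
    have habs2 : |((m:ℝ) + 1) * (t + m)| = ((m:ℝ) + 1) * (t + m) := _root_.abs_of_pos (by positivity)
    rw [habs2]
    have h1 : |t - 1| ≤ x + 2 := by
      rw [abs_le]; constructor <;> nlinarith
    have h2 : c * (((m : ℝ) + 1) ^ 2) ≤ ((m:ℝ) + 1) * (t + m) := by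
      have hca : c ≤ x / 2 := min_le_left _ _
      have hcb : c ≤ 1 := min_le_right _ _
      have : c * ((m:ℝ) + 1) ≤ t + m := by
        have : c * m ≤ m := by nlinarith [Nat.cast_nonneg (α := ℝ) m]
        nlinarith
      calc c * (((m : ℝ) + 1) ^ 2) = ((m:ℝ) + 1) * (c * ((m:ℝ)+1)) := by ring
        _ ≤ ((m:ℝ) + 1) * (t + m) := by nlinarith
    calc |t - 1| / (((m:ℝ) + 1) * (t + m)) ≤ (x + 2) / (c * (((m : ℝ) + 1) ^ 2)) := by
          apply div_le_div₀ (by linarith) h1 (by positivity) h2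
      _ = (x + 2) / c * (((m : ℝ) + 1) ^ 2)⁻¹ := by
          rw [div_mul_eq_div_div, div_eq_mul_inv ((x+2)/c)]
  have hU : Summable (fun m : ℕ => (x + 2) / c * (((m : ℝ) + 1) ^ 2)⁻¹) := by
    apply Summable.mul_left
    have h := (summable_nat_add_iff 1).2 (Real.summable_one_div_nat_pow.2 one_lt_two)
    apply h.congr
    intro n
    push_cast
    rw [one_div]
  have hTU2 : TendstoUniformlyOn
      (fun (n : ℕ) (t : ℝ) => ∑ m ∈ Finset.range (n + 1), (((m : ℝ) + 1)⁻¹ - (t + m)⁻¹))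
      (fun t => ∑' m : ℕ, (((m : ℝ) + 1)⁻¹ - (t + m)⁻¹)) atTop s :=
    tuo_succ (tendstoUniformlyOn_tsum_nat hU hbound)
  have harm_eq : ∀ n : ℕ, (harmonic (n + 1) : ℝ) = ∑ m ∈ Finset.range (n + 1), ((m : ℝ) + 1)⁻¹ := by
    intro n
    rw [harmonic]
    push_cast
    rfl
  have hTU : TendstoUniformlyOn F' d atTop s := by
    have := hTU1.add hTU2
    apply this.congr
    apply Eventually.of_forall
    intro n t ht
    simp only [Pi.add_apply, hF'def, harm_eq n, Finset.sum_sub_distrib]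
    ring
  -- derivatives
  have hder : ∀ᶠ n in atTop, ∀ t ∈ s, HasDerivAt (fun u => Real.BohrMollerup.logGammaSeq u n)
      (F' n t) t := by
    apply Eventually.of_forall
    intro n t ht
    have ht0 : 0 < t := lt_trans (by linarith) ht.1
    have h1 : HasDerivAt (fun u : ℝ => u * Real.log n + Real.log (Nat.factorial n)) (Real.log n) t :=
      (hasDerivAt_mul_const (Real.log n)).add_const _
    have h2 : HasDerivAt (fun u : ℝ => ∑ m ∈ Finset.range (n + 1), Real.log (u + m))
        (∑ m ∈ Finset.range (n + 1), (t + m)⁻¹) t := by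
      apply HasDerivAt.fun_sum
      intro m _
      have htm : (0:ℝ) < t + m := by positivity
      have := ((hasDerivAt_id t).add_const (m : ℝ)).log htm.ne'
      simpa [one_div] using this
    have := h1.fun_sub h2
    simpa [Real.BohrMollerup.logGammaSeq, hF'def] using this
  have hlim : ∀ t ∈ s, Tendsto (fun n => Real.BohrMollerup.logGammaSeq t n) atTop
      (𝓝 (Real.log (Real.Gamma t))) := by
    intro t ht
    exact Real.BohrMollerup.tendsto_log_gamma (lt_trans (by linarith) ht.1)
  have key : HasDerivAt (fun t => Real.log (Real.Gamma t)) (d x) x :=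
    hasDerivAt_of_tendstoUniformlyOn hs_open hTU hder hlim hxs
  -- digamma x = d x
  have hΓ : 0 < Real.Gamma x := Real.Gamma_pos_of_pos hx
  have hdig : _root_.digamma x = d x := by
    have hG : HasDerivAt Real.Gamma (Real.Gamma x * d x) x := by
      have h2 := key.exp
      rw [Real.exp_log hΓ] at h2
      apply h2.congr_of_eventuallyEq
      filter_upwards [isOpen_Ioi.mem_nhds (Set.mem_Ioi.2 hx)] with t ht
      rw [Real.exp_log (Real.Gamma_pos_of_pos ht)]
    rw [_root_.digamma, hG.deriv, mul_comm, mul_div_assoc, div_self hΓ.ne', mul_one]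
  rw [hdig]
  exact hTU.tendsto_at hxs

/-- arg of a complex number with positive real part. -/
lemma arg_of_re_pos {w : ℂ} (hw : 0 < w.re) : Complex.arg w = Real.arctan (w.im / w.re) := by
  have h1 : |Complex.arg w| < Real.pi / 2 := Complex.abs_arg_lt_pi_div_two_iff.2 (Or.inl hw)
  rw [abs_lt] at h1
  rw [← Complex.tan_arg, Real.arctan_tan h1.1 h1.2]

lemma exp_I_im (w : ℂ) :
    Complex.exp (Complex.I * w.im) = Complex.exp w / (Real.exp w.re : ℂ) := by
  rw [Complex.ofReal_exp, ← Complex.exp_sub]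
  congr 1
  apply Complex.ext <;> simp

/-- The key limiting identity: `exp(i G(y)) = Γ(z)/|Γ(z)|`. -/
lemma exp_I_G {x : ℝ} (hx : 0 < x) (y : ℝ) :
    Complex.exp (Complex.I * ((y * _root_.digamma x
        + ∑' n : ℕ, (y / (x + n) - Real.arctan (y / (x + n))) : ℝ) : ℂ))
      = Complex.Gamma ((x : ℂ) + Complex.I * y)
        / (‖Complex.Gamma ((x : ℂ) + Complex.I * y)‖ : ℂ) := by
  set z : ℂ := (x : ℂ) + Complex.I * y with hzdef
  have hzre : z.re = x := by simp [hzdef]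
  have hzim : z.im = y := by simp [hzdef]
  have hzrepos : 0 < z.re := by rw [hzre]; exact hx
  set Φ : ℕ → ℝ := fun n => y * Real.log n - ∑ m ∈ Finset.range (n + 1),
    Real.arctan (y / (x + m)) with hΦ
  set G : ℝ := y * _root_.digamma x + ∑' n : ℕ, (y / (x + n) - Real.arctan (y / (x + n))) with hG
  -- convergence of Φ to G
  have h1 : Tendsto Φ atTop (𝓝 G) := by
    have ha := ((tendsto_digamma_seq hx).const_mul y)
    have hb := ((summable_main hx y).hasSum.tendsto_sum_nat).comp (tendsto_add_atTop_nat 1)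
    have := ha.add hb
    apply this.congr
    intro n
    simp only [Function.comp_apply, Finset.sum_sub_distrib, Finset.mul_sum, mul_sub]
    rw [hΦ]
    have : ∀ m ∈ Finset.range (n + 1), y * (x + (m:ℝ))⁻¹ = y / (x + m) :=
      fun m _ => (div_eq_mul_inv y _).symm
    rw [Finset.sum_congr rfl this]
    ring
  -- Φ n is the imaginary part of a logarithm of GammaSeq z n
  set ℓ : ℕ → ℂ := fun n => z * (Real.log n : ℂ) + (Real.log (Nat.factorial n) : ℂ)
    - ∑ m ∈ Finset.range (n + 1), Complex.log (z + m) with hℓ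
  have hzm : ∀ m : ℕ, (0:ℝ) < (z + m).re := by
    intro m
    simp only [Complex.add_re, Complex.natCast_re, hzre]
    positivity
  have hℓim : ∀ n, (ℓ n).im = Φ n := by
    intro n
    have hsum : (∑ m ∈ Finset.range (n + 1), Complex.log (z + m)).im
        = ∑ m ∈ Finset.range (n + 1), Real.arctan (y / (x + m)) := by
      rw [Complex.im_sum]
      apply Finset.sum_congr rfl
      intro m _
      rw [Complex.log_im, arg_of_re_pos (hzm m)]
      congr 1
      simp [hzdef]
    rw [hℓ, hΦ]
    simp only [Complex.sub_im, Complex.add_im, Complex.mul_im, Complex.ofReal_re,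
      Complex.ofReal_im, mul_zero, add_zero, zero_add, hsum, hzim]
  have hℓexp : ∀ n : ℕ, 1 ≤ n → Complex.exp (ℓ n) = Complex.GammaSeq z n := by
    intro n hn
    have hn0 : (n : ℂ) ≠ 0 := Nat.cast_ne_zero.2 (by omega)
    rw [hℓ, Complex.exp_sub, Complex.exp_add, Complex.GammaSeq]
    congr 1
    · congr 1
      · rw [Complex.cpow_def_of_ne_zero hn0]
        congr 1
        rw [← Complex.ofReal_natCast, ← Complex.ofReal_log (Nat.cast_nonneg n)]
        ring
      · rw [← Complex.ofReal_exp, Real.exp_log]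
        · simp
        · exact_mod_cast Nat.factorial_pos n
    · rw [Complex.exp_sum]
      apply Finset.prod_congr rfl
      intro m _
      have hne : z + (m : ℂ) ≠ 0 := by
        intro h
        have h2 := hzm m
        rw [h] at h2
        simp at h2
      exact Complex.exp_log hne
  -- two limits for exp(I Φ n)
  have hΓz : Complex.Gamma z ≠ 0 := Complex.Gamma_ne_zero_of_re_pos hzrepos
  have hlim1 : Tendsto (fun n => Complex.exp (Complex.I * (Φ n : ℂ))) atTop
      (𝓝 (Complex.exp (Complex.I * (G : ℂ)))) := by
    apply (Complex.continuous_exp.tendsto _).comp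
    apply Filter.Tendsto.const_mul
    exact (Complex.continuous_ofReal.tendsto _).comp h1
  have hlim2 : Tendsto (fun n => Complex.exp (Complex.I * (Φ n : ℂ))) atTop
      (𝓝 (Complex.Gamma z / (‖Complex.Gamma z‖ : ℂ))) := by
    have heq : ∀ᶠ n in atTop, Complex.exp (Complex.I * (Φ n : ℂ))
        = Complex.GammaSeq z n / (‖Complex.GammaSeq z n‖ : ℂ) := by
      filter_upwards [eventually_ge_atTop 1] with n hn
      rw [← hℓim n, exp_I_im (ℓ n), hℓexp n hn]
      congr 1
      rw [← hℓexp n hn, Complex.norm_exp]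
    have hg := Complex.GammaSeq_tendsto_Gamma z
    have hnorm : Tendsto (fun n => (‖Complex.GammaSeq z n‖ : ℂ)) atTop
        (𝓝 ((‖Complex.Gamma z‖ : ℂ))) := by
      apply (Complex.continuous_ofReal.tendsto _).comp
      exact (continuous_norm.tendsto _).comp hg
    have hdiv := Tendsto.div hg hnorm (by simpa using hΓz)
    exact Tendsto.congr' (Filter.EventuallyEq.symm heq) hdiv
  exact tendsto_nhds_unique hlim1 hlim2

end ArgGammaAux

/-- For `x > 0`, the imaginary part of the principal branch of `log Γ` (the continuous
branch on the right half-plane, real on the positive reals) at `x + iy` equals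
`y·ψ(x) + Σₙ (y/(x+n) - arctan(y/(x+n)))`, and the series converges. -/
theorem arg_gamma_formula (x y : ℝ) (hx : 0 < x)
    (L : ℂ → ℂ)
    (hL_cont : ContinuousOn L {z : ℂ | 0 < z.re})
    (hL_exp : ∀ z ∈ {z : ℂ | 0 < z.re}, Complex.exp (L z) = Complex.Gamma z)
    (hL_real : ∀ t : ℝ, 0 < t → (L (t : ℂ)).im = 0) :
    Summable (fun n : ℕ => y / (x + n) - Real.arctan (y / (x + n))) ∧
    (L (x + Complex.I * y)).im =
      y * _root_.digamma x + ∑' n : ℕ, (y / (x + n) - Real.arctan (y / (x + n))) := by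
  refine ⟨ArgGammaAux.summable_main hx y, ?_⟩
  set F : ℝ → ℝ := fun t => (L ((x : ℂ) + Complex.I * t)).im with hF
  set G : ℝ → ℝ := fun t => t * _root_.digamma x
    + ∑' n : ℕ, (t / (x + n) - Real.arctan (t / (x + n))) with hG
  have hzmem : ∀ t : ℝ, ((x : ℂ) + Complex.I * t) ∈ {z : ℂ | 0 < z.re} := by
    intro t
    simp [hx]
  -- key : exp(I (F - G)) = 1
  have key : ∀ t : ℝ, Complex.exp (Complex.I * ((F t - G t : ℝ) : ℂ)) = 1 := by
    intro t
    set z : ℂ := (x : ℂ) + Complex.I * t with hz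
    have h1 : Complex.exp (Complex.I * ((F t : ℝ) : ℂ))
        = Complex.Gamma z / (‖Complex.Gamma z‖ : ℂ) := by
      have := ArgGammaAux.exp_I_im (L z)
      rw [hF]
      simp only []
      rw [this, hL_exp z (hzmem t)]
      congr 2
      rw [← hL_exp z (hzmem t), Complex.norm_exp]
    have h2 : Complex.exp (Complex.I * ((G t : ℝ) : ℂ))
        = Complex.Gamma z / (‖Complex.Gamma z‖ : ℂ) := ArgGammaAux.exp_I_G hx t
    have hne : Complex.exp (Complex.I * ((G t : ℝ) : ℂ)) ≠ 0 := Complex.exp_ne_zero _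
    rw [Complex.ofReal_sub, mul_sub, Complex.exp_sub, h1, ← h2, div_self hne]
  have hk : ∀ t : ℝ, ∃ k : ℤ, F t - G t = 2 * Real.pi * k := by
    intro t
    obtain ⟨k, hk⟩ := Complex.exp_eq_one_iff.1 (key t)
    refine ⟨k, ?_⟩
    have := congrArg Complex.im hk
    simpa [mul_comm] using this
  -- continuity
  have hFcont : Continuous F := by
    apply Complex.continuous_im.comp
    apply hL_cont.comp_continuous _ hzmem
    fun_prop
  have hGcont : Continuous G := by
    apply Continuous.add (by fun_prop)
    rw [continuous_iff_continuousAt]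
    intro t₀
    set R : ℝ := |t₀| + 1 with hR
    have htball : t₀ ∈ Metric.ball (0:ℝ) R := by
      simp only [Metric.mem_ball, dist_zero_right, Real.norm_eq_abs, hR]
      linarith
    have hu : Summable (fun n : ℕ => R ^ 2 * ((x + n) ^ 2)⁻¹) :=
      (ArgGammaAux.summable_inv_sq hx).mul_left _
    have hTU := tendstoUniformlyOn_tsum_nat (f := fun (n : ℕ) (t : ℝ) =>
        t / (x + n) - Real.arctan (t / (x + n))) hu (s := Metric.ball (0:ℝ) R) ?_
    · have hcont : ContinuousOn (fun t : ℝ => ∑' n : ℕ,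
          (t / (x + n) - Real.arctan (t / (x + n)))) (Metric.ball (0:ℝ) R) := by
        apply hTU.continuousOn
        apply Frequently.of_forall
        intro n
        apply Continuous.continuousOn
        apply continuous_finset_sum
        intro i _
        exact (continuous_id.div_const _).sub
          (Real.continuous_arctan.comp (continuous_id.div_const _))
      exact hcont.continuousAt (Metric.isOpen_ball.mem_nhds htball)
    · intro n t ht
      simp only [Metric.mem_ball, dist_zero_right, Real.norm_eq_abs] at ht
      have hxn : (0:ℝ) < x + n := by positivity
      calc ‖t / (x + n) - Real.arctan (t / (x + n))‖ ≤ (t / (x + n)) ^ 2 :=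
            ArgGammaAux.abs_self_sub_arctan_le _
        _ = t ^ 2 * ((x + n) ^ 2)⁻¹ := by rw [div_pow, div_eq_mul_inv]
        _ ≤ R ^ 2 * ((x + n) ^ 2)⁻¹ := by
            have h1 : t ^ 2 ≤ R ^ 2 := by
              have h2 : |t| ≤ R := le_of_lt ht
              nlinarith [abs_nonneg t, _root_.sq_abs t]
            exact mul_le_mul_of_nonneg_right h1 (by positivity)
  -- zero at 0
  have h0 : F 0 - G 0 = 0 := by
    have hF0 : F 0 = 0 := by
      rw [hF]
      simp only [Complex.ofReal_zero, mul_zero, add_zero]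
      exact hL_real x hx
    have hG0 : G 0 = 0 := by
      rw [hG]
      simp [Real.arctan_zero, tsum_zero]
    rw [hF0, hG0, sub_zero]
  -- clopen argument
  set S : Set ℝ := {t | F t - G t = 0} with hS
  have hclosed : IsClosed S := isClosed_eq (hFcont.sub hGcont) continuous_const
  have hopen : IsOpen S := by
    rw [isOpen_iff_mem_nhds]
    intro t₀ ht₀
    have hcont : ContinuousAt (fun t => F t - G t) t₀ := (hFcont.sub hGcont).continuousAt
    have ht₀' : F t₀ - G t₀ = 0 := ht₀
    have hev : ∀ᶠ t in 𝓝 t₀, |F t - G t| < 2 * Real.pi := by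
      have : Tendsto (fun t => F t - G t) (𝓝 t₀) (𝓝 0) := by rw [← ht₀']; exact hcont
      have := this.eventually (eventually_abs_sub_lt 0 (by positivity : (0:ℝ) < 2 * Real.pi))
      simpa using this
    filter_upwards [hev] with t ht
    obtain ⟨k, hkt⟩ := hk t
    have hπ : 0 < Real.pi := Real.pi_pos
    have : |(k:ℝ)| < 1 := by
      rw [hkt] at ht
      rw [abs_mul, abs_of_pos (by positivity : (0:ℝ) < 2 * Real.pi)] at ht
      nlinarith [abs_nonneg (k:ℝ)]
    have hk1 : |k| < 1 := by
      rw [← Int.cast_abs] at this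
      exact_mod_cast this
    have hk0 : k = 0 := Int.abs_lt_one_iff.mp hk1
    simp only [hS, Set.mem_setOf_eq, hkt, hk0]
    simp
  have : S = Set.univ := by
    rcases isClopen_iff.1 ⟨hclosed, hopen⟩ with h | h
    · exfalso
      have h0S : (0:ℝ) ∈ S := h0
      rw [h] at h0S
      exact Set.notMem_empty 0 h0S
    · exact h
  have hy : F y - G y = 0 := by
    have : y ∈ S := this ▸ Set.mem_univ y
    exact this
  have := sub_eq_zero.1 hy
  rw [hF, hG] at this
  exact this
end

section
/- The Fourier transform identity -2T/(T² + 1/4)² = i ∫_{-∞}^∞ e^{iTx} · x · e^{-|x|/2} dx holds for all real T. -/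
open Complex MeasureTheory Set Filter Real

noncomputable section

lemma tendsto_cexp_aux {c : ℂ} (hc : c.re < 0) :
    Tendsto (fun x : ℝ => Complex.exp (c * x)) atTop (nhds 0) := by
  rw [tendsto_zero_iff_norm_tendsto_zero]
  have h : Tendsto (fun x : ℝ => c.re * x) atTop atBot :=
    tendsto_id.const_mul_atTop_of_neg hc
  refine (Real.tendsto_exp_atBot.comp h).congr fun x => ?_
  simp [Complex.norm_exp]

lemma tendsto_mul_cexp_aux {c : ℂ} (hc : c.re < 0) :
    Tendsto (fun x : ℝ => (x : ℂ) * Complex.exp (c * x)) atTop (nhds 0) := by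
  rw [tendsto_zero_iff_norm_tendsto_zero]
  refine (tendsto_rpow_mul_exp_neg_mul_atTop_nhds_zero 1 (-c.re) (by linarith)).congr' ?_
  filter_upwards [eventually_gt_atTop (0:ℝ)] with x hx
  simp [Real.rpow_one, Complex.norm_exp, abs_of_pos hx]

lemma integrableOn_abs_mul_exp {c : ℂ} (hc : c.re < 0) :
    IntegrableOn (fun x : ℝ => |x| * Real.exp (c.re * x)) (Ioi 0) := by
  apply integrable_of_isBigO_exp_neg (b := -c.re / 2) (by linarith)
  · fun_prop
  · have ht : Tendsto (fun x : ℝ =>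
        (|x| * Real.exp (c.re * x)) / Real.exp (-(-c.re / 2) * x)) atTop (nhds 0) := by
      refine (tendsto_rpow_mul_exp_neg_mul_atTop_nhds_zero 1 (-c.re / 2) (by linarith)).congr' ?_
      filter_upwards [eventually_gt_atTop (0:ℝ)] with x hx
      rw [Real.rpow_one, abs_of_pos hx, eq_div_iff (Real.exp_ne_zero _), mul_assoc,
        ← Real.exp_add]
      ring_nf
    exact (Asymptotics.isLittleO_of_tendsto
      (fun x hx => absurd hx (Real.exp_ne_zero _)) ht).isBigO

lemma integrableOn_mul_cexp {c : ℂ} (hc : c.re < 0) :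
    IntegrableOn (fun x : ℝ => (x : ℂ) * Complex.exp (c * x)) (Ioi 0) := by
  refine (integrableOn_abs_mul_exp hc).mono' ?_ ?_
  · exact (Continuous.aestronglyMeasurable (by fun_prop)).restrict
  · refine Filter.Eventually.of_forall fun x => ?_
    simp [Complex.norm_exp]

lemma integral_mul_cexp {c : ℂ} (hc : c.re < 0) :
    ∫ x in Ioi (0:ℝ), (x : ℂ) * Complex.exp (c * x) = 1 / c ^ 2 := by
  have hc0 : c ≠ 0 := fun h => by simp [h] at hc
  set F : ℝ → ℂ := fun x => (c * (x * Complex.exp (c * x)) - Complex.exp (c * x)) / c ^ 2 with hF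
  have hderiv : ∀ x ∈ Ici (0:ℝ), HasDerivAt F ((x : ℂ) * Complex.exp (c * x)) x := by
    intro x _
    have hid : HasDerivAt (fun y : ℝ => (y : ℂ)) 1 x := by
      simpa using (hasDerivAt_id x).ofReal_comp
    have hcx : HasDerivAt (fun y : ℝ => c * (y : ℂ)) c x := by
      simpa using hid.const_mul c
    have hexp : HasDerivAt (fun y : ℝ => Complex.exp (c * y)) (c * Complex.exp (c * x)) x := by
      simpa [mul_comm] using hcx.cexp
    have h1 : HasDerivAt (fun y : ℝ => (y : ℂ) * Complex.exp (c * y))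
        (Complex.exp (c * x) + (x : ℂ) * (c * Complex.exp (c * x))) x := by
      exact (hid.mul hexp).congr_deriv (by simp)
    have h2 := ((h1.const_mul c).sub hexp).div_const (c ^ 2)
    refine h2.congr_deriv ?_
    field_simp
    ring
  have htend : Tendsto F atTop (nhds 0) := by
    have := (((tendsto_mul_cexp_aux hc).const_mul c).sub (tendsto_cexp_aux hc)).div_const (c ^ 2)
    simpa using this
  rw [integral_Ioi_of_hasDerivAt_of_tendsto' hderiv (integrableOn_mul_cexp hc) htend]
  simp [hF]
  ring

end

open Complex MeasureTheory

theorem fourier_transform_kernel (T : ℝ) :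
    ((-2 * T / (T ^ 2 + 1 / 4) ^ 2 : ℝ) : ℂ) =
      Complex.I * ∫ x : ℝ, Complex.exp (Complex.I * T * x) * x * Real.exp (-|x| / 2) := by
  set cp : ℂ := Complex.I * T - 1 / 2 with hcp
  set cm : ℂ := -(Complex.I * T) - 1 / 2 with hcm
  have hcp_re : cp.re < 0 := by norm_num [hcp]
  have hcm_re : cm.re < 0 := by norm_num [hcm]
  set f : ℝ → ℂ := fun x => Complex.exp (Complex.I * T * x) * x * Real.exp (-|x| / 2) with hf
  have hpos : EqOn f (fun x : ℝ => (x : ℂ) * Complex.exp (cp * x)) (Ioi 0) := by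
    intro x hx
    rw [mem_Ioi] at hx
    simp only [hf, abs_of_pos hx, Complex.ofReal_exp, hcp]
    rw [mul_right_comm, ← Complex.exp_add, mul_comm]
    congr 2
    push_cast
    ring
  have hnegf : EqOn (fun x : ℝ => f (-x))
      (fun x : ℝ => -((x : ℂ) * Complex.exp (cm * x))) (Ioi 0) := by
    intro x hx
    rw [mem_Ioi] at hx
    simp only [hf, abs_neg, abs_of_pos hx, Complex.ofReal_exp, Complex.ofReal_neg, hcm]
    rw [mul_right_comm, ← Complex.exp_add]
    rw [show Complex.I * ↑T * (-↑x : ℂ) + ((-x / 2 : ℝ) : ℂ)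
        = (-(Complex.I * ↑T) - 1 / 2) * ↑x by push_cast; ring]
    ring
  have hi_pos : IntegrableOn f (Ioi 0) :=
    (integrableOn_mul_cexp hcp_re).congr_fun (fun x hx => (hpos hx).symm) measurableSet_Ioi
  have hi_negcomp : IntegrableOn (fun x : ℝ => f (-x)) (Ioi 0) :=
    IntegrableOn.congr_fun (integrableOn_mul_cexp hcm_re).neg
      (fun x hx => (hnegf hx).symm) measurableSet_Ioi
  have hmp : MeasurePreserving (fun x : ℝ => -x)
      (volume.restrict (Ioi 0)) (volume.restrict (Iio 0)) := by
    have h1 : MeasurePreserving (fun x : ℝ => -x) volume volume :=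
      Measure.measurePreserving_neg _
    have h2 := h1.restrict_preimage_emb (MeasurableEquiv.neg ℝ).measurableEmbedding (Iio 0)
    convert h2 using 2
    ext x
    simp
  have hi_neg : IntegrableOn f (Iio 0) :=
    (hmp.integrable_comp_emb (MeasurableEquiv.neg ℝ).measurableEmbedding).mp hi_negcomp
  have hi_Iic : IntegrableOn f (Iic 0) := hi_neg.congr_set_ae Iio_ae_eq_Iic.symm
  have h1 : ∫ x in Set.Ioi (0:ℝ), f x = 1 / cp ^ 2 := by
    rw [setIntegral_congr_fun measurableSet_Ioi hpos]
    exact integral_mul_cexp hcp_re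
  have h2 : ∫ x in Set.Iic (0:ℝ), f x = -(1 / cm ^ 2) := by
    have h3 := integral_comp_neg_Ioi (c := 0) f
    rw [neg_zero] at h3
    rw [← h3, setIntegral_congr_fun measurableSet_Ioi hnegf, integral_neg,
      integral_mul_cexp hcm_re]
  rw [← intervalIntegral.integral_Iic_add_Ioi hi_Iic hi_pos, h1, h2]
  have hd : ((T:ℂ) ^ 2 + 1 / 4) ≠ 0 := by
    rw [show ((T:ℂ) ^ 2 + 1 / 4) = ((T ^ 2 + 1 / 4 : ℝ) : ℂ) by push_cast; ring, Ne,
      Complex.ofReal_eq_zero]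
    positivity
  have hcp0 : cp ≠ 0 := fun h => by rw [h] at hcp_re; simp at hcp_re
  have hcm0 : cm ≠ 0 := fun h => by rw [h] at hcm_re; simp at hcm_re
  have hI : (Complex.I : ℂ) ^ 2 = -1 := Complex.I_sq
  have e1 : cp ^ 2 = 1 / 4 - (T:ℂ) ^ 2 - Complex.I * T := by
    rw [hcp]; linear_combination (T:ℂ) ^ 2 * hI
  have e2 : cm ^ 2 = 1 / 4 - (T:ℂ) ^ 2 + Complex.I * T := by
    rw [hcm]; linear_combination (T:ℂ) ^ 2 * hI
  have hY : (1 / 4 - (T:ℂ) ^ 2 - Complex.I * T) ≠ 0 := e1 ▸ pow_ne_zero 2 hcp0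
  have hX : (1 / 4 - (T:ℂ) ^ 2 + Complex.I * T) ≠ 0 := e2 ▸ pow_ne_zero 2 hcm0
  have hprod : (1 / 4 - (T:ℂ) ^ 2 - Complex.I * T) * (1 / 4 - (T:ℂ) ^ 2 + Complex.I * T)
      = ((T:ℂ) ^ 2 + 1 / 4) ^ 2 := by linear_combination -(T:ℂ) ^ 2 * hI
  have key : -(1 / cm ^ 2) + 1 / cp ^ 2
      = 2 * Complex.I * (T:ℂ) / (((T:ℂ) ^ 2 + 1 / 4) ^ 2) := by
    have step : 1 / (1 / 4 - (T:ℂ) ^ 2 - Complex.I * T)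
        - 1 / (1 / 4 - (T:ℂ) ^ 2 + Complex.I * T)
        = ((1 / 4 - (T:ℂ) ^ 2 + Complex.I * T) - (1 / 4 - (T:ℂ) ^ 2 - Complex.I * T)) /
          ((1 / 4 - (T:ℂ) ^ 2 - Complex.I * T) * (1 / 4 - (T:ℂ) ^ 2 + Complex.I * T)) := by
      rw [div_sub_div _ _ hY hX, one_mul, mul_one]
    rw [e1, e2, neg_add_eq_sub, step,
      show (1 / 4 - (T:ℂ) ^ 2 + Complex.I * T) - (1 / 4 - (T:ℂ) ^ 2 - Complex.I * T)
        = 2 * Complex.I * (T:ℂ) by ring, hprod]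
  rw [key]
  push_cast
  linear_combination (-2 * (T:ℂ) / (((T:ℂ) ^ 2 + 1 / 4) ^ 2)) * hI
end

section
/- For n a positive integer and G_n(x) = 2 - 2·T_n((x² - 1/4)/(x² + 1/4)) with T_n the Chebyshev polynomial of the first kind, as x → ∞ one has G_n(x) = n²/x² + O(1/x⁴); in particular x²·G_n(x) → n². -/
open Polynomial Filter Asymptotics

lemma T_eval_one' (m : ℤ) : (Polynomial.Chebyshev.T ℝ m).eval 1 = 1 := by
  induction m using Polynomial.Chebyshev.induct with
  | zero => simp
  | one => simp
  | add_two k ih1 ih2 =>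
    rw [Polynomial.Chebyshev.T_add_two]
    simp [ih1, ih2]; norm_num
  | neg_add_one k ih1 ih2 =>
    have h := Polynomial.Chebyshev.T_sub_one ℝ (-(k:ℤ))
    rw [h]
    simp only [Polynomial.eval_sub, Polynomial.eval_mul, Polynomial.eval_ofNat,
      Polynomial.eval_X, ih1, ih2]
    ring

lemma U_eval_one' (m : ℤ) : (Polynomial.Chebyshev.U ℝ m).eval 1 = (m : ℝ) + 1 := by
  induction m using Polynomial.Chebyshev.induct with
  | zero => simp
  | one => norm_num [Polynomial.Chebyshev.U_one]
  | add_two k ih1 ih2 =>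
    rw [Polynomial.Chebyshev.U_add_two]
    simp only [Polynomial.eval_sub, Polynomial.eval_mul, Polynomial.eval_ofNat,
      Polynomial.eval_X, ih1, ih2]
    push_cast
    ring
  | neg_add_one k ih1 ih2 =>
    have h := Polynomial.Chebyshev.U_sub_one ℝ (-(k:ℤ))
    rw [h]
    simp only [Polynomial.eval_sub, Polynomial.eval_mul, Polynomial.eval_ofNat,
      Polynomial.eval_X, ih1, ih2]
    push_cast
    ring

lemma T_deriv_one' (m : ℤ) : (Polynomial.derivative (Polynomial.Chebyshev.T ℝ m)).eval 1 = (m : ℝ)^2 := by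
  rw [Polynomial.Chebyshev.T_derivative_eq_U]
  simp [U_eval_one']
  ring


theorem G_asymptotic (n : ℕ) (hn : 0 < n) :
    ((fun x : ℝ =>
        (2 - 2 * (Polynomial.Chebyshev.T ℝ (n : ℤ)).eval ((x ^ 2 - 1 / 4) / (x ^ 2 + 1 / 4)))
          - (n : ℝ) ^ 2 / x ^ 2) =O[atTop] fun x : ℝ => 1 / x ^ 4) ∧
    Tendsto
      (fun x : ℝ =>
        x ^ 2 * (2 - 2 * (Polynomial.Chebyshev.T ℝ (n : ℤ)).eval ((x ^ 2 - 1 / 4) / (x ^ 2 + 1 / 4))))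
      atTop (nhds ((n : ℝ) ^ 2)) := by
  set P := Polynomial.Chebyshev.T ℝ (n : ℤ) with hP
  have hdvd : (X ^ 2 : ℝ[X]) ∣ (P.comp (1 - X) - (1 - Polynomial.C ((n:ℝ)^2) * X)) := by
    rw [Polynomial.X_pow_dvd_iff]
    intro d hd
    interval_cases d
    · rw [Polynomial.coeff_zero_eq_eval_zero]
      simp [Polynomial.eval_comp, hP, T_eval_one']
    · have h1 : ∀ p : ℝ[X], p.coeff 1 = (Polynomial.derivative p).eval 0 := by
        intro p
        rw [← Polynomial.coeff_zero_eq_eval_zero, Polynomial.coeff_derivative]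
        simp
      rw [h1]
      simp [Polynomial.derivative_comp, Polynomial.eval_comp, hP, T_deriv_one']
  obtain ⟨Q, hQ⟩ := hdvd
  have key : ∀ s : ℝ, P.eval (1 - s) = 1 - (n:ℝ)^2 * s + s^2 * Q.eval s := by
    intro s
    have h := congrArg (Polynomial.eval s) hQ
    simp [Polynomial.eval_comp] at h
    linarith
  set t : ℝ → ℝ := fun x => (1/2) / (x^2 + 1/4) with ht
  have hpos : ∀ x : ℝ, (0:ℝ) < x^2 + 1/4 := fun x => by positivity
  have hu : ∀ x : ℝ, (x^2 - 1/4) / (x^2 + 1/4) = 1 - t x := by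
    intro x
    have h := (hpos x).ne'
    simp only [ht]
    rw [eq_sub_iff_add_eq, ← add_div, div_eq_iff h]
    ring
  have hF : ∀ x : ℝ, 2 - 2 * P.eval ((x^2 - 1/4)/(x^2 + 1/4))
      = 2 * (n:ℝ)^2 * t x - 2 * (t x)^2 * Q.eval (t x) := by
    intro x
    rw [hu x, key (t x)]
    ring
  have htend : Tendsto t atTop (nhds 0) := by
    have h1 : Tendsto (fun x:ℝ => x^2 + 1/4) atTop atTop :=
      tendsto_atTop_add_const_right _ _ (tendsto_pow_atTop two_ne_zero)
    have h2 := (tendsto_inv_atTop_zero.comp h1).const_mul (1/2 : ℝ)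
    simpa [ht, div_eq_mul_inv, Function.comp] using h2
  have hQb : (fun x => Q.eval (t x)) =O[atTop] (fun _ : ℝ => (1:ℝ)) :=
    (((Polynomial.continuous Q).tendsto 0).comp htend).isBigO_one ℝ
  have htO : t =O[atTop] (fun x : ℝ => 1/x^2) := by
    apply IsBigO.of_bound 1
    filter_upwards [eventually_ge_atTop (1:ℝ)] with x hx
    have hx0 : (0:ℝ) < x := lt_of_lt_of_le one_pos hx
    have hx2 : (0:ℝ) < x^2 := by positivity
    simp only [Real.norm_eq_abs, one_mul]
    rw [abs_of_nonneg (by positivity : (0:ℝ) ≤ t x),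
      abs_of_nonneg (by positivity : (0:ℝ) ≤ 1/x^2)]
    show (1/2:ℝ)/(x^2+1/4) ≤ 1/x^2
    rw [div_le_div_iff₀ (hpos x) hx2]
    nlinarith
  have ht2O : (fun x => (t x)^2) =O[atTop] (fun x : ℝ => 1/x^4) := by
    have h := htO.pow 2
    refine h.trans (IsBigO.of_bound 1 ?_)
    filter_upwards [eventually_ge_atTop (1:ℝ)] with x hx
    have hx0 : (0:ℝ) < x := lt_of_lt_of_le one_pos hx
    have : ((1:ℝ)/x^2)^2 = 1/x^4 := by
      field_simp
    rw [this]
    simp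
  have hA : (fun x : ℝ => 2 * (n:ℝ)^2 * t x - (n:ℝ)^2 / x^2) =O[atTop]
      (fun x : ℝ => 1/x^4) := by
    apply IsBigO.of_bound ((n:ℝ)^2/4)
    filter_upwards [eventually_ge_atTop (1:ℝ)] with x hx
    have hx0 : (0:ℝ) < x := lt_of_lt_of_le one_pos hx
    have hx2 : (0:ℝ) < x^2 := by positivity
    have hx4 : (0:ℝ) < x^4 := by positivity
    have e : 2 * (n:ℝ)^2 * t x - (n:ℝ)^2 / x^2
        = -((n:ℝ)^2/4) / (x^2 * (x^2 + 1/4)) := by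
      show 2 * (n:ℝ)^2 * ((1/2) / (x^2 + 1/4)) - (n:ℝ)^2 / x^2 = _
      field_simp
      ring
    rw [e]
    simp only [Real.norm_eq_abs]
    rw [abs_div, abs_neg, abs_of_nonneg (by positivity : (0:ℝ) ≤ (n:ℝ)^2/4),
      abs_of_nonneg (le_of_lt (by positivity : (0:ℝ) < x^2 * (x^2 + 1/4))),
      abs_of_nonneg (by positivity : (0:ℝ) ≤ 1/x^4)]
    rw [mul_one_div]
    gcongr
    nlinarith
  -- combine for part 1
  have hB : (fun x : ℝ => -(2 * (t x)^2 * Q.eval (t x))) =O[atTop]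
      (fun x : ℝ => 1/x^4) := by
    have h := (ht2O.mul hQb).const_mul_left 2
    simpa [mul_assoc] using h.neg_left
  have part1 : ((fun x : ℝ =>
      (2 - 2 * P.eval ((x ^ 2 - 1 / 4) / (x ^ 2 + 1 / 4)))
        - (n : ℝ) ^ 2 / x ^ 2) =O[atTop] fun x : ℝ => 1 / x ^ 4) := by
    have he : (fun x : ℝ =>
        (2 - 2 * P.eval ((x ^ 2 - 1 / 4) / (x ^ 2 + 1 / 4))) - (n : ℝ) ^ 2 / x ^ 2)
        = fun x => (2 * (n:ℝ)^2 * t x - (n:ℝ)^2 / x^2)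
            + (-(2 * (t x)^2 * Q.eval (t x))) := by
      funext x
      rw [hF x]
      ring
    rw [he]
    exact hA.add hB
  refine ⟨part1, ?_⟩
  -- part 2
  have hz : Tendsto (fun x : ℝ => x^2 * ((2 - 2 * P.eval ((x ^ 2 - 1 / 4) / (x ^ 2 + 1 / 4)))
      - (n : ℝ) ^ 2 / x ^ 2)) atTop (nhds 0) := by
    have h := (isBigO_refl (fun x : ℝ => x^2) atTop).mul part1
    refine h.trans_tendsto ?_
    have he : (fun x : ℝ => x^2 * (1/x^4)) =ᶠ[atTop] (fun x : ℝ => 1/x^2) := by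
      filter_upwards [eventually_gt_atTop (0:ℝ)] with x hx
      field_simp
    refine Tendsto.congr' he.symm ?_
    have := tendsto_pow_atTop (n := 2) two_ne_zero (α := ℝ)
    simpa [one_div, Pi.inv_def] using this.inv_tendsto_atTop
  have hfin : Tendsto (fun x : ℝ =>
      x^2 * ((2 - 2 * P.eval ((x ^ 2 - 1 / 4) / (x ^ 2 + 1 / 4)))
        - (n : ℝ) ^ 2 / x ^ 2) + (n:ℝ)^2) atTop (nhds ((n:ℝ)^2)) := by
    simpa using hz.add_const ((n:ℝ)^2)
  refine hfin.congr' ?_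
  filter_upwards [eventually_gt_atTop (0:ℝ)] with x hx
  have hx2 : (x:ℝ)^2 ≠ 0 := by positivity
  field_simp
  ring
end

section
/- For positive integer n, I₁(n) := ∫₀^∞ (-G_n'(x)) · (1 - (log π/(2π)) x) dx = -(n/2) log π + 2(1 - (-1)ⁿ), where G_n(x) = 2 - 2·T_n((x² - 1/4)/(x² + 1/4)). -/
open Polynomial MeasureTheory

open Polynomial.Chebyshev Filter Set Topology Real

noncomputable def ccI : ℝ := Real.log Real.pi / (2 * Real.pi)
noncomputable def uuI (x : ℝ) : ℝ := (x ^ 2 - 1 / 4) / (x ^ 2 + 1 / 4)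
noncomputable def fff (m : ℤ) (x : ℝ) : ℝ :=
  (m : ℝ) * (Polynomial.Chebyshev.U ℝ (m - 1)).eval (uuI x) * (2 * x / (1 / 4 + x ^ 2) ^ 2) *
    (1 - ccI * x)
noncomputable def ggg (m : ℤ) (x : ℝ) : ℝ :=
  (4 * x * (Polynomial.Chebyshev.T ℝ m).eval (uuI x) / (x ^ 2 + 1 / 4) ^ 2
    - 2 * (m : ℝ) * (Polynomial.Chebyshev.U ℝ (m - 1)).eval (uuI x) * x / (x ^ 2 + 1 / 4) ^ 3) *
    (1 - ccI * x)
noncomputable def PsiI (m : ℤ) (x : ℝ) : ℝ :=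
  -(2 * (Polynomial.Chebyshev.T ℝ m).eval (uuI x) / (x ^ 2 + 1 / 4)) * (1 - ccI * x)
    + (2 * ccI / (m : ℝ)) *
      (x / (x ^ 2 + 1 / 4) * (Polynomial.Chebyshev.U ℝ (m - 1)).eval (uuI x))
noncomputable def FoneI (x : ℝ) : ℝ :=
  -(1 - ccI * x) / (x ^ 2 + 1 / 4) - 2 * ccI * Real.arctan (2 * x)


lemma rI_pos (x : ℝ) : (0:ℝ) < x ^ 2 + 1 / 4 := by positivity
lemma rI_ne (x : ℝ) : (x:ℝ) ^ 2 + 1 / 4 ≠ 0 := (rI_pos x).ne'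

lemma hasDerivAt_uuI (x : ℝ) : HasDerivAt uuI (x / (x ^ 2 + 1 / 4) ^ 2) x := by
  have h1 : HasDerivAt (fun y : ℝ => y ^ 2 - 1 / 4) (2 * x) x := by
    simpa using ((hasDerivAt_pow 2 x).sub_const (1/4))
  have h2 : HasDerivAt (fun y : ℝ => y ^ 2 + 1 / 4) (2 * x) x := by
    simpa using ((hasDerivAt_pow 2 x).add_const (1/4))
  have := h1.div h2 (rI_ne x)
  refine this.congr_deriv ?_
  field_simp
  ring

lemma hasDerivAt_Teval (m : ℤ) (x : ℝ) :
    HasDerivAt (fun y => (T ℝ m).eval (uuI y))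
      ((m : ℝ) * (U ℝ (m - 1)).eval (uuI x) * (x / (x ^ 2 + 1 / 4) ^ 2)) x := by
  have := ((T ℝ m).hasDerivAt (uuI x)).comp x (hasDerivAt_uuI x)
  refine this.congr_deriv ?_
  simp [T_derivative_eq_U, mul_assoc]

lemma hasDerivAt_Ueval (m : ℤ) (x : ℝ) :
    HasDerivAt (fun y => (U ℝ m).eval (uuI y))
      ((derivative (U ℝ m)).eval (uuI x) * (x / (x ^ 2 + 1 / 4) ^ 2)) x :=
  ((U ℝ m).hasDerivAt (uuI x)).comp x (hasDerivAt_uuI x)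

lemma Ukey (m : ℤ) (x : ℝ) :
    (m : ℝ) * (T ℝ m).eval (uuI x) =
      uuI x * (U ℝ (m - 1)).eval (uuI x)
        - (1 - uuI x ^ 2) * (derivative (U ℝ (m - 1))).eval (uuI x) := by
  have h := congrArg (eval (uuI x)) (add_one_mul_T_eq_poly_in_U (R := ℝ) (m - 1))
  rw [show m - 1 + 1 = m by ring] at h
  simp only [eval_mul, eval_add, eval_intCast, eval_one, eval_sub, eval_X, eval_pow] at h
  push_cast at h
  linarith [h]

lemma Ukey2 (m : ℤ) (x : ℝ) :
    (m : ℝ) * (T ℝ m).eval (uuI x) * (x ^ 2 + 1 / 4) ^ 2 =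
      (x ^ 2 - 1 / 4) * (x ^ 2 + 1 / 4) * (U ℝ (m - 1)).eval (uuI x)
        - x ^ 2 * (derivative (U ℝ (m - 1))).eval (uuI x) := by
  have hk := Ukey m x
  have h1 : uuI x * (x ^ 2 + 1 / 4) = x ^ 2 - 1 / 4 := div_mul_cancel₀ _ (rI_ne x)
  have h2 : (1 - uuI x ^ 2) * (x ^ 2 + 1 / 4) ^ 2 = x ^ 2 := by
    unfold uuI; field_simp; ring
  linear_combination (x ^ 2 + 1 / 4) ^ 2 * hk
    + (x ^ 2 + 1 / 4) * (U ℝ (m - 1)).eval (uuI x) * h1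
    - (derivative (U ℝ (m - 1))).eval (uuI x) * h2

lemma hasDerivAt_sI (m : ℤ) (x : ℝ) :
    HasDerivAt (fun y => y / (y ^ 2 + 1 / 4) * (U ℝ (m - 1)).eval (uuI y))
      (-(m : ℝ) * (T ℝ m).eval (uuI x) / (x ^ 2 + 1 / 4)) x := by
  have hq : HasDerivAt (fun y : ℝ => y / (y ^ 2 + 1 / 4))
      ((1 * (x ^ 2 + 1 / 4) - x * (2 * x)) / (x ^ 2 + 1 / 4) ^ 2) x := by
    have h2 : HasDerivAt (fun y : ℝ => y ^ 2 + 1 / 4) (2 * x) x := by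
      simpa using ((hasDerivAt_pow 2 x).add_const (1/4))
    exact (hasDerivAt_id x).div h2 (rI_ne x)
  have h := hq.mul (hasDerivAt_Ueval (m - 1) x)
  refine h.congr_deriv ?_
  have hk2 := Ukey2 m x
  have hr := rI_ne x
  refine mul_left_cancel₀ (pow_ne_zero 3 hr) ?_
  have L : (x ^ 2 + 1 / 4) ^ 3 * (-(m : ℝ) * (T ℝ m).eval (uuI x) / (x ^ 2 + 1 / 4))
      = -(m : ℝ) * (T ℝ m).eval (uuI x) * (x ^ 2 + 1 / 4) ^ 2 := by
    field_simp
  have R : (x ^ 2 + 1 / 4) ^ 3 *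
        ((1 * (x ^ 2 + 1 / 4) - x * (2 * x)) / (x ^ 2 + 1 / 4) ^ 2 * (U ℝ (m - 1)).eval (uuI x) +
          x / (x ^ 2 + 1 / 4) *
            ((derivative (U ℝ (m - 1))).eval (uuI x) * (x / (x ^ 2 + 1 / 4) ^ 2)))
      = (1 * (x ^ 2 + 1 / 4) - x * (2 * x)) * (x ^ 2 + 1 / 4) * (U ℝ (m - 1)).eval (uuI x)
          + x ^ 2 * (derivative (U ℝ (m - 1))).eval (uuI x) := by
    field_simp
  rw [L, R]
  linear_combination hk2

lemma hasDerivAt_PsiI (m : ℤ) (hm : (m : ℝ) ≠ 0) (x : ℝ) :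
    HasDerivAt (PsiI m) (ggg m x) x := by
  have hden : HasDerivAt (fun y : ℝ => y ^ 2 + 1 / 4) (2 * x) x := by
    simpa using ((hasDerivAt_pow 2 x).add_const (1/4))
  have hlin : HasDerivAt (fun y : ℝ => 1 - ccI * y) (-ccI) x := by
    simpa using (((hasDerivAt_id x).const_mul ccI).const_sub 1)
  have hT2 : HasDerivAt (fun y => 2 * (T ℝ m).eval (uuI y))
      (2 * ((m : ℝ) * (U ℝ (m - 1)).eval (uuI x) * (x / (x ^ 2 + 1 / 4) ^ 2))) x :=
    (hasDerivAt_Teval m x).const_mul 2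
  have hdiv := hT2.div hden (rI_ne x)
  have h1 := (hdiv.neg).mul hlin
  have h2 := (hasDerivAt_sI m x).const_mul (2 * ccI / (m : ℝ))
  have h := h1.add h2
  refine h.congr_deriv ?_
  unfold ggg
  simp only [Pi.neg_apply, Pi.div_apply]
  have hr := rI_ne x
  field_simp
  ring

lemma Ueval_rec (m : ℤ) (x : ℝ) :
    (U ℝ m).eval (uuI x) = 2 * uuI x * (U ℝ (m-1)).eval (uuI x) - (U ℝ (m-2)).eval (uuI x) := by
  have h := congrArg (eval (uuI x)) (U_eq ℝ m)
  simpa using h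

lemma Teval_rel (m : ℤ) (x : ℝ) :
    (T ℝ m).eval (uuI x) = (U ℝ m).eval (uuI x) - uuI x * (U ℝ (m-1)).eval (uuI x) := by
  have h := congrArg (eval (uuI x)) (T_eq_U_sub_X_mul_U ℝ m)
  simpa using h

lemma fff_rec (m : ℤ) (x : ℝ) :
    fff (m + 1) x = 2 * fff m x - fff (m - 1) x + ggg m x := by
  have E1 := Ueval_rec m x
  have E2 := Teval_rel m x
  have h1 : uuI x * (x ^ 2 + 1 / 4) = x ^ 2 - 1 / 4 := div_mul_cancel₀ _ (rI_ne x)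
  have hr := rI_ne x
  set P0 := (U ℝ (m - 2)).eval (uuI x) with hP0
  set P1 := (U ℝ (m - 1)).eval (uuI x) with hP1
  set P2 := (U ℝ m).eval (uuI x) with hP2
  set C := (T ℝ m).eval (uuI x) with hC
  have core : ((m : ℝ) + 1) * P2 - 2 * (m : ℝ) * P1 + ((m : ℝ) - 1) * P0
      - 2 * C + 2 * (m : ℝ) * (1 - uuI x) * P1 = 0 := by
    linear_combination ((m : ℝ) - 1) * E1 - 2 * E2
  refine mul_left_cancel₀ (pow_ne_zero 3 hr) ?_
  have Llhs : (x ^ 2 + 1 / 4) ^ 3 * fff (m + 1) x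
      = ((m : ℝ) + 1) * P2 * (2 * x) * (x ^ 2 + 1 / 4) * (1 - ccI * x) := by
    unfold fff
    rw [show m + 1 - 1 = m by ring, ← hP2]
    push_cast
    field_simp
    ring
  have Lrhs : (x ^ 2 + 1 / 4) ^ 3 * (2 * fff m x - fff (m - 1) x + ggg m x)
      = 2 * ((m : ℝ) * P1 * (2 * x) * (x ^ 2 + 1 / 4) * (1 - ccI * x))
        - ((m : ℝ) - 1) * P0 * (2 * x) * (x ^ 2 + 1 / 4) * (1 - ccI * x)
        + (4 * x * C * (x ^ 2 + 1 / 4) - 2 * (m : ℝ) * P1 * x) * (1 - ccI * x) := by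
    unfold fff ggg
    rw [show m - 1 - 1 = m - 2 by ring, ← hP0, ← hP1, ← hC]
    push_cast
    field_simp
    ring
  rw [Llhs, Lrhs]
  linear_combination (2 * x * (1 - ccI * x) * (x ^ 2 + 1 / 4)) * core
    + (4 * x * (m : ℝ) * P1 * (1 - ccI * x)) * h1

lemma Teval_neg_one (k : ℕ) : (T ℝ (k : ℤ)).eval (-1 : ℝ) = (-1 : ℝ) ^ k := by
  have h := T_real_cos π (k : ℤ)
  rw [Real.cos_pi] at h
  rw [h]
  have := Real.cos_nat_mul_pi_sub 0 k
  simpa using this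

lemma uuI_zero : uuI 0 = -1 := by norm_num [uuI]

lemma tendsto_rinv : Tendsto (fun x : ℝ => (x ^ 2 + 1 / 4)⁻¹) atTop (𝓝 0) := by
  apply Filter.Tendsto.inv_tendsto_atTop
  exact tendsto_atTop_add_const_right _ _ (tendsto_pow_atTop two_ne_zero)

lemma tendsto_xr : Tendsto (fun x : ℝ => x / (x ^ 2 + 1 / 4)) atTop (𝓝 0) := by
  apply squeeze_zero' (g := fun x : ℝ => x⁻¹)
  · filter_upwards [eventually_gt_atTop (0:ℝ)] with x hx
    positivity
  · filter_upwards [eventually_gt_atTop (0:ℝ)] with x hx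
    rw [div_le_iff₀ (rI_pos x), inv_mul_eq_div, le_div_iff₀ hx]
    nlinarith [sq_nonneg x]
  · exact tendsto_inv_atTop_zero

lemma tendsto_uuI : Tendsto uuI atTop (𝓝 1) := by
  have h : uuI = fun x : ℝ => 1 - (1 / 2) * (x ^ 2 + 1 / 4)⁻¹ := by
    funext x
    unfold uuI
    field_simp
    ring
  rw [h]
  simpa using tendsto_const_nhds.sub (tendsto_rinv.const_mul (1/2 : ℝ))

lemma tendsto_Teval (m : ℤ) :
    Tendsto (fun x => (T ℝ m).eval (uuI x)) atTop (𝓝 ((T ℝ m).eval 1)) :=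
  ((T ℝ m).continuousAt).tendsto.comp tendsto_uuI

lemma tendsto_Ueval (m : ℤ) :
    Tendsto (fun x => (U ℝ m).eval (uuI x)) atTop (𝓝 ((U ℝ m).eval 1)) :=
  ((U ℝ m).continuousAt).tendsto.comp tendsto_uuI

lemma uuI_mem (x : ℝ) : uuI x ∈ Icc (-1 : ℝ) 1 := by
  rw [Set.mem_Icc]
  unfold uuI
  constructor
  · rw [le_div_iff₀ (rI_pos x)]; nlinarith [sq_nonneg x]
  · rw [div_le_one (rI_pos x)]; nlinarith [sq_nonneg x]

lemma cont_aux (P : ℝ[X]) :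
    Continuous (fun x : ℝ => P.eval (uuI x) * (2 * x / (1 / 4 + x ^ 2) ^ 2) * (1 - ccI * x)) := by
  have hu : Continuous uuI := by
    apply Continuous.div (by continuity) (by continuity) (fun x => rI_ne x)
  apply Continuous.mul
  apply Continuous.mul (P.continuous_aeval.comp hu)
  · apply Continuous.div (by continuity) (by continuity)
    intro x
    positivity
  · continuity

lemma integrableOn_aux (P : ℝ[X]) :
    IntegrableOn (fun x : ℝ => P.eval (uuI x) * (2 * x / (1 / 4 + x ^ 2) ^ 2) * (1 - ccI * x))
      (Ioi (0 : ℝ)) := by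
  obtain ⟨M, hM⟩ := isCompact_Icc.exists_bound_of_continuousOn
    (f := fun y : ℝ => P.eval y) (P.continuous_aeval.continuousOn (s := Icc (-1 : ℝ) 1))
  have hM0 : 0 ≤ M := le_trans (norm_nonneg _) (hM 0 (by norm_num))
  refine Integrable.mono' (g := fun x : ℝ => M * (8 + 8 * |ccI|) * (1 + x ^ 2)⁻¹)
    ((integrable_inv_one_add_sq.const_mul _).integrableOn)
    ((cont_aux P).aestronglyMeasurable.restrict) ?_
  filter_upwards [ae_restrict_mem measurableSet_Ioi] with x hx
  have hx0 : (0:ℝ) < x := hx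
  have ha : (0:ℝ) ≤ |ccI| := abs_nonneg _
  have key : 2 * x / (1 / 4 + x ^ 2) ^ 2 * (1 + |ccI| * x) ≤ (8 + 8 * |ccI|) * (1 + x ^ 2)⁻¹ := by
    rw [inv_eq_one_div, mul_one_div, div_mul_eq_mul_div,
      div_le_div_iff₀ (by positivity) (by positivity)]
    have h1 : x ≤ x ^ 2 + 1 / 4 := by nlinarith [sq_nonneg (x - 1/2)]
    have h2 : 1 + x ^ 2 ≤ 4 * (1 / 4 + x ^ 2) := by nlinarith [sq_nonneg x]
    have h3 : x ^ 2 ≤ 1 / 4 + x ^ 2 := by nlinarith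
    have hA := mul_le_mul h1 h2 (by positivity) (by positivity)
    have hB := mul_le_mul h3 h2 (by positivity) (by positivity)
    have hB' := mul_le_mul_of_nonneg_left hB ha
    nlinarith [hA, hB', ha, hx0.le]
  calc ‖P.eval (uuI x) * (2 * x / (1 / 4 + x ^ 2) ^ 2) * (1 - ccI * x)‖
      = ‖P.eval (uuI x)‖ * (2 * x / (1 / 4 + x ^ 2) ^ 2) * |1 - ccI * x| := by
        rw [norm_mul, norm_mul]
        congr 2
        rw [Real.norm_eq_abs, abs_of_nonneg (by positivity)]
    _ ≤ M * (2 * x / (1 / 4 + x ^ 2) ^ 2) * (1 + |ccI| * x) := by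
        apply mul_le_mul
        · apply mul_le_mul_of_nonneg_right (hM _ (uuI_mem x)) (by positivity)
        · calc |1 - ccI * x| ≤ |1| + |ccI * x| := abs_sub _ _
            _ = 1 + |ccI| * x := by
              rw [abs_one, abs_mul, abs_of_nonneg hx0.le]
        · positivity
        · positivity
    _ = M * (2 * x / (1 / 4 + x ^ 2) ^ 2 * (1 + |ccI| * x)) := by ring
    _ ≤ M * ((8 + 8 * |ccI|) * (1 + x ^ 2)⁻¹) := mul_le_mul_of_nonneg_left key hM0
    _ = M * (8 + 8 * |ccI|) * (1 + x ^ 2)⁻¹ := by ring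

lemma integrable_fff (m : ℤ) : IntegrableOn (fff m) (Ioi (0 : ℝ)) := by
  have h := integrableOn_aux (Polynomial.C (m : ℝ) * U ℝ (m - 1))
  simp only [eval_mul, eval_C] at h
  exact h

lemma integrable_ggg (m : ℤ) : IntegrableOn (ggg m) (Ioi (0 : ℝ)) := by
  have h : ggg m = fun x => fff (m + 1) x - 2 * fff m x + fff (m - 1) x := by
    funext x
    have := fff_rec m x
    linarith
  rw [h]
  exact (((integrable_fff (m+1)).sub ((integrable_fff m).const_mul 2)).add
    (integrable_fff (m-1)))

lemma tendsto_PsiI (m : ℤ) : Tendsto (PsiI m) atTop (𝓝 0) := by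
  have hA : Tendsto (fun x : ℝ => (x ^ 2 + 1 / 4)⁻¹ - ccI * (x / (x ^ 2 + 1 / 4))) atTop
      (𝓝 (0 - ccI * 0)) := tendsto_rinv.sub (tendsto_xr.const_mul ccI)
  have hB := ((tendsto_Teval m).const_mul (-2 : ℝ)).mul hA
  have hC := ((tendsto_xr.mul (tendsto_Ueval (m - 1))).const_mul (2 * ccI / (m : ℝ)))
  have h := hB.add hC
  have hfun : PsiI m = fun x => -2 * (T ℝ m).eval (uuI x) *
      ((x ^ 2 + 1 / 4)⁻¹ - ccI * (x / (x ^ 2 + 1 / 4)))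
      + 2 * ccI / (m : ℝ) * (x / (x ^ 2 + 1 / 4) * (U ℝ (m - 1)).eval (uuI x)) := by
    funext x
    unfold PsiI
    ring
  rw [hfun]
  simpa using h

lemma integral_ggg (m : ℤ) (hm : (m : ℝ) ≠ 0) :
    ∫ x in Ioi (0 : ℝ), ggg m x = 8 * (T ℝ m).eval (-1 : ℝ) := by
  have h := integral_Ioi_of_hasDerivAt_of_tendsto' (a := 0)
    (fun x _ => hasDerivAt_PsiI m hm x) (integrable_ggg m) (tendsto_PsiI m)
  rw [h]
  unfold PsiI
  rw [uuI_zero]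
  norm_num
  ring

lemma hasDerivAt_FoneI (x : ℝ) : HasDerivAt FoneI (fff 1 x) x := by
  have hden : HasDerivAt (fun y : ℝ => y ^ 2 + 1 / 4) (2 * x) x := by
    simpa using ((hasDerivAt_pow 2 x).add_const (1/4))
  have hnum : HasDerivAt (fun y : ℝ => -(1 - ccI * y)) ccI x := by
    exact ((((hasDerivAt_id x).const_mul ccI).const_sub 1).neg).congr_deriv (by simp)
  have h1 := hnum.div hden (rI_ne x)
  have harc : HasDerivAt (fun y : ℝ => Real.arctan (2 * y)) (1 / (1 + (2 * x) ^ 2) * 2) x :=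
    (Real.hasDerivAt_arctan (2 * x)).comp x (by simpa using (hasDerivAt_id x).const_mul 2)
  have h := h1.sub (harc.const_mul (2 * ccI))
  refine h.congr_deriv ?_
  unfold fff
  rw [show (1 : ℤ) - 1 = 0 by ring, U_zero]
  have h4 : (1 : ℝ) + (2 * x) ^ 2 ≠ 0 := by positivity
  have hr := rI_ne x
  simp only [eval_one]
  push_cast
  field_simp
  ring

lemma tendsto_FoneI : Tendsto FoneI atTop (𝓝 (-(ccI * π))) := by
  have e : (fun x : ℝ => -(1 - ccI * x) / (x ^ 2 + 1 / 4)) =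
      fun x : ℝ => -(x ^ 2 + 1 / 4)⁻¹ + ccI * (x / (x ^ 2 + 1 / 4)) := by
    funext x; ring
  have h1 : Tendsto (fun x : ℝ => -(1 - ccI * x) / (x ^ 2 + 1 / 4)) atTop (𝓝 0) := by
    rw [e]
    simpa using (tendsto_rinv.neg.add (tendsto_xr.const_mul ccI))
  have h2 : Tendsto (fun x : ℝ => Real.arctan (2 * x)) atTop (𝓝 (π / 2)) :=
    tendsto_nhds_of_tendsto_nhdsWithin
      (Real.tendsto_arctan_atTop.comp (Tendsto.const_mul_atTop two_pos tendsto_id))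
  have h := h1.sub ((h2.const_mul (2 * ccI)))
  rw [show -(ccI * π) = 0 - 2 * ccI * (π / 2) by ring]
  show Tendsto (fun x : ℝ => -(1 - ccI * x) / (x ^ 2 + 1 / 4) - 2 * ccI * Real.arctan (2 * x))
    atTop (𝓝 (0 - 2 * ccI * (π / 2)))
  convert h using 2

lemma J_one : ∫ x in Ioi (0 : ℝ), fff 1 x = -(ccI * π) + 4 := by
  have h := integral_Ioi_of_hasDerivAt_of_tendsto' (a := 0)
    (fun x _ => hasDerivAt_FoneI x) (integrable_fff 1) tendsto_FoneI
  rw [h]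
  unfold FoneI
  norm_num

lemma J_nat (k : ℕ) : (∫ x in Ioi (0 : ℝ), fff (k : ℤ) x)
    = -((k : ℝ) / 2) * Real.log Real.pi + 2 * (1 - (-1 : ℝ) ^ k) := by
  induction k using Nat.twoStepInduction with
  | zero =>
    simp [fff]
  | one =>
    rw [Nat.cast_one, J_one]
    have hpi : Real.pi ≠ 0 := Real.pi_ne_zero
    unfold ccI
    field_simp
    ring
  | more k ih0 ih1 =>
    have hrec : ∀ x : ℝ, fff ((k : ℤ) + 2) x
        = 2 * fff ((k : ℤ) + 1) x - fff (k : ℤ) x + ggg ((k : ℤ) + 1) x := by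
      intro x
      have h := fff_rec ((k : ℤ) + 1) x
      rw [show (k : ℤ) + 1 + 1 = (k : ℤ) + 2 by ring,
        show (k : ℤ) + 1 - 1 = (k : ℤ) by ring] at h
      exact h
    have hcast2 : ((k + 2 : ℕ) : ℤ) = (k : ℤ) + 2 := by push_cast; ring
    have hcast1 : ((k + 1 : ℕ) : ℤ) = (k : ℤ) + 1 := by push_cast; ring
    rw [hcast2]
    have hI1 : IntegrableOn (fun x => 2 * fff ((k : ℤ) + 1) x) (Ioi (0:ℝ)) :=
      (integrable_fff _).const_mul 2
    have hsplit : (∫ x in Ioi (0 : ℝ), fff ((k : ℤ) + 2) x)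
        = 2 * (∫ x in Ioi (0 : ℝ), fff ((k : ℤ) + 1) x)
          - (∫ x in Ioi (0 : ℝ), fff (k : ℤ) x)
          + ∫ x in Ioi (0 : ℝ), ggg ((k : ℤ) + 1) x := by
      simp_rw [hrec]
      have hf2 : IntegrableOn (fun x => 2 * fff ((k : ℤ) + 1) x - fff (k : ℤ) x) (Ioi (0:ℝ)) :=
        hI1.sub (integrable_fff _)
      rw [integral_add hf2 (integrable_ggg _), integral_sub hI1 (integrable_fff _),
        integral_const_mul]
    rw [hsplit]
    rw [ih0]
    rw [hcast1] at ih1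
    rw [ih1]
    have hgg : (∫ x in Ioi (0 : ℝ), ggg ((k : ℤ) + 1) x) = 8 * (-1 : ℝ) ^ (k + 1) := by
      rw [integral_ggg _ (by push_cast; positivity), show (k : ℤ) + 1 = ((k + 1 : ℕ) : ℤ) by
        push_cast; ring, Teval_neg_one]
    rw [hgg]
    push_cast
    rw [pow_succ, pow_succ]
    ring

theorem I_one_integral (n : ℕ) (hn : 0 < n) :
    ∫ x in Set.Ioi (0 : ℝ),
        (n * (Polynomial.Chebyshev.U ℝ ((n : ℤ) - 1)).eval ((x ^ 2 - 1 / 4) / (x ^ 2 + 1 / 4)) *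
            (2 * x / (1 / 4 + x ^ 2) ^ 2)) *
          (1 - (Real.log Real.pi / (2 * Real.pi)) * x) =
      -((n : ℝ) / 2) * Real.log Real.pi + 2 * (1 - (-1 : ℝ) ^ n) := by
  have e : ∀ x : ℝ,
      (↑n * (Polynomial.Chebyshev.U ℝ ((n : ℤ) - 1)).eval ((x ^ 2 - 1 / 4) / (x ^ 2 + 1 / 4)) *
            (2 * x / (1 / 4 + x ^ 2) ^ 2)) *
          (1 - (Real.log Real.pi / (2 * Real.pi)) * x) = fff ((n : ℕ) : ℤ) x := by
    intro x
    unfold fff uuI ccI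
    push_cast
    ring
  simp_rw [e]
  exact J_nat n
end

section
/- Let σ, T be real with 0 ≤ σ ≤ 1 and T > 0, and n a positive integer. Then (1 - (1 - 1/(σ+iT))ⁿ) + (1 - (1 - 1/(σ-iT))ⁿ) = 2 - 2·((σ-1)² + T²)^{n/2}/(σ² + T²)^{n/2} · T_n( (σ(σ-1) + T²) / √((σ²+T²)((σ-1)²+T²)) ), where T_n is the Chebyshev polynomial of the first kind. -/
open Polynomial Complex

theorem li_summand_chebyshev (σ T : ℝ) (hσ0 : 0 ≤ σ) (hσ1 : σ ≤ 1) (hT : 0 < T)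
    (n : ℕ) (hn : 0 < n) :
    (1 - (1 - 1 / ((σ : ℂ) + Complex.I * T)) ^ n) +
      (1 - (1 - 1 / ((σ : ℂ) - Complex.I * T)) ^ n) =
      ((2 - 2 * (((σ - 1) ^ 2 + T ^ 2) ^ ((n : ℝ) / 2) / (σ ^ 2 + T ^ 2) ^ ((n : ℝ) / 2)) *
          (Polynomial.Chebyshev.T ℝ (n : ℤ)).eval
            ((σ * (σ - 1) + T ^ 2) / Real.sqrt ((σ ^ 2 + T ^ 2) * ((σ - 1) ^ 2 + T ^ 2))) : ℝ) : ℂ) := by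
  set a : ℝ := σ ^ 2 + T ^ 2 with ha_def
  set b : ℝ := (σ - 1) ^ 2 + T ^ 2 with hb_def
  have ha : 0 < a := by positivity
  have hb : 0 < b := by positivity
  have hsa : 0 < Real.sqrt a := Real.sqrt_pos.2 ha
  have hsb : 0 < Real.sqrt b := Real.sqrt_pos.2 hb
  set z : ℂ := (σ : ℂ) + Complex.I * T with hz_def
  have hzre : z.re = σ := by simp [hz_def]
  have hzim : z.im = T := by simp [hz_def]
  have hz0 : z ≠ 0 := fun h => hT.ne' (by rw [← hzim, h, Complex.zero_im])
  have hz1 : z - 1 ≠ 0 := fun h => by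
    have : (z - 1).im = 0 := by rw [h]; simp
    simp [hzim] at this
    exact hT.ne' this
  set w : ℂ := (z - 1) / z with hw_def
  have hw0 : w ≠ 0 := div_ne_zero hz1 hz0
  have habsz : ‖z‖ = Real.sqrt a := by
    rw [Complex.norm_def, Complex.normSq_apply, hzre, hzim, ha_def]
    ring_nf
  have habsz1 : ‖z - 1‖ = Real.sqrt b := by
    rw [Complex.norm_def, Complex.normSq_apply]
    simp only [Complex.sub_re, Complex.sub_im, Complex.one_re, Complex.one_im, hzre, hzim]
    rw [hb_def]; ring_nf
  have habsw : ‖w‖ = Real.sqrt b / Real.sqrt a := by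
    rw [hw_def, norm_div, habsz, habsz1]
  have hwre : w.re = (σ * (σ - 1) + T ^ 2) / a := by
    rw [hw_def, Complex.div_re, Complex.normSq_apply]
    simp only [Complex.sub_re, Complex.sub_im, Complex.one_re, Complex.one_im, hzre, hzim]
    rw [ha_def]; ring_nf
  have hcos : Real.cos w.arg = (σ * (σ - 1) + T ^ 2) / Real.sqrt (a * b) := by
    rw [Complex.cos_arg hw0, hwre, habsw, Real.sqrt_mul ha.le]
    rw [div_div_div_eq, div_eq_div_iff (by positivity) (by positivity)]
    linear_combination (Real.sqrt b * (σ * (σ - 1) + T ^ 2)) * Real.mul_self_sqrt ha.le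
  -- w^n in polar form
  have hpow : w ^ n = ((‖w‖ ^ n : ℝ) : ℂ) * Complex.exp (((n : ℝ) * w.arg : ℝ) * Complex.I) := by
    conv_lhs => rw [← Complex.norm_mul_exp_arg_mul_I w]
    rw [mul_pow, ← Complex.exp_nat_mul]
    push_cast
    ring_nf
  have hre : (w ^ n).re = ‖w‖ ^ n * Real.cos ((n : ℝ) * w.arg) := by
    rw [hpow, Complex.re_ofReal_mul, Complex.exp_ofReal_mul_I_re]
  -- cheb
  have hcheb : Real.cos ((n : ℝ) * w.arg) =
      (Polynomial.Chebyshev.T ℝ (n : ℤ)).eval (Real.cos w.arg) := by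
    rw [Polynomial.Chebyshev.T_real_cos w.arg (n : ℤ)]
    norm_num
  -- abs w ^ n as rpow
  have habspow : ‖w‖ ^ n = b ^ ((n : ℝ) / 2) / a ^ ((n : ℝ) / 2) := by
    rw [habsw, div_pow, Real.sqrt_eq_rpow, Real.sqrt_eq_rpow,
      ← Real.rpow_natCast (a ^ (1 / (2:ℝ))) n, ← Real.rpow_natCast (b ^ (1 / (2:ℝ))) n,
      ← Real.rpow_mul hb.le, ← Real.rpow_mul ha.le]
    ring_nf
  have key : (w ^ n).re = b ^ ((n : ℝ) / 2) / a ^ ((n : ℝ) / 2) *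
      (Polynomial.Chebyshev.T ℝ (n : ℤ)).eval
        ((σ * (σ - 1) + T ^ 2) / Real.sqrt (a * b)) := by
    rw [hre, hcheb, hcos, habspow]
  -- conj relation
  have hconj : (σ : ℂ) - Complex.I * T = (starRingEnd ℂ) z := by
    rw [hz_def]; simp [Complex.ext_iff]
  have h1 : 1 - 1 / z = w := by
    rw [hw_def, sub_div, div_self hz0]
  have h2 : 1 - 1 / ((σ : ℂ) - Complex.I * T) = (starRingEnd ℂ) w := by
    rw [hconj, hw_def, map_div₀, map_sub, map_one, sub_div,
      div_self (show (starRingEnd ℂ) z ≠ 0 by simpa using hz0)]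
  calc (1 - (1 - 1 / z) ^ n) + (1 - (1 - 1 / ((σ : ℂ) - Complex.I * T)) ^ n)
      = 2 - (w ^ n + (starRingEnd ℂ) (w ^ n)) := by rw [h1, h2, map_pow]; ring
    _ = 2 - ((2 * (w ^ n).re : ℝ) : ℂ) := by rw [Complex.add_conj]
    _ = _ := by rw [key]; push_cast; ring
end
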